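/- arXiv:2202.03802 — 10 statements merged into one kernel-verified Lean document; each statement's English description precedes it below -/
import Mathlib

section
/- The potential ρ is upper semicontinuous on Δ. In particular, ρ is continuous at every point x ∈ Δ with ρ(x) = 0. -/
open scoped ZeroAtInfty
open scoped Topology
open Filter

noncomputable section

variable {X : Type*} [TopologicalSpace X]

/-- The fibre of `φ : Δ → X` over `y`. -/
def Fiber (Δ : Set X) (φ : X → X) (y : X) : Set X := {x | x ∈ Δ ∧ φ x = y}

/-- `ρ : Δ → [0,∞)` is a potential with bound `M`: it is nonnegative on `Δ`, the sums
`Σ_{x ∈ φ⁻¹(y)} ρ(x)` are (summable and) bounded by `M`, and for every `a ∈ C₀(Δ)` the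
function `L(a)(y) = Σ_{x ∈ φ⁻¹(y)} ρ(x) a(x)` belongs to `C₀(X)`. -/
def IsPotential (Δ : Set X) (φ : X → X) (ρ : X → ℝ) (M : ℝ) : Prop :=
  (∀ x ∈ Δ, 0 ≤ ρ x) ∧
  (∀ y : X, Summable fun x : Fiber Δ φ y => ρ x.1) ∧
  (∀ y : X, (∑' x : Fiber Δ φ y, ρ x.1) ≤ M) ∧
  ∀ a : C₀(X, ℂ), (∀ x ∉ Δ, a x = 0) →
    ∃ b : C₀(X, ℂ), ∀ y : X, b y = ∑' x : Fiber Δ φ y, (ρ x.1 : ℂ) * a x.1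

/-- `Δ_pos`: the set of points of `Δ` where `ρ` is strictly positive. -/
def Dpos (Δ : Set X) (ρ : X → ℝ) : Set X := {x | x ∈ Δ ∧ 0 < ρ x}

/-- `Δ_reg`: the set of points of `Δ_pos` where `ρ` (as a function on `Δ`) is continuous. -/
def Dreg (Δ : Set X) (ρ : X → ℝ) : Set X :=
  {x | x ∈ Δ ∧ 0 < ρ x ∧ ContinuousWithinAt ρ Δ x}

/-- The potential `ρ` is upper semicontinuous on `Δ`; in particular it is
continuous (as a function on `Δ`) at every point of `Δ` where it vanishes. -/
theorem potential_upperSemicontinuous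
    {X : Type*} [TopologicalSpace X] [LocallyCompactSpace X] [T2Space X]
    (Δ : Set X) (φ : X → X) (ρ : X → ℝ) (M : ℝ)
    (hΔ : IsOpen Δ) (hφ : ContinuousOn φ Δ)
    (hcount : ∀ y : X, (Fiber Δ φ y).Countable)
    (hpot : IsPotential Δ φ ρ M) :
    (∀ x ∈ Δ, UpperSemicontinuousWithinAt ρ Δ x) ∧
    (∀ x ∈ Δ, ρ x = 0 → ContinuousWithinAt ρ Δ x) := by
  classical
  obtain ⟨hnn, hsum, _hbd, hL⟩ := hpot
  have main : ∀ x₀ ∈ Δ, ∀ ε > 0, ∀ᶠ x in nhdsWithin x₀ Δ, ρ x < ρ x₀ + ε := by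
    intro x₀ hx₀ ε hε
    set y₀ := φ x₀ with hy₀
    have hx₀f : x₀ ∈ Fiber Δ φ y₀ := ⟨hx₀, rfl⟩
    set x₀p : Fiber Δ φ y₀ := ⟨x₀, hx₀f⟩ with hx₀p
    -- choose a finset t of the fiber over y₀, containing x₀, with tail sum < ε/2
    have htail := tendsto_tsum_compl_atTop_zero (fun x : Fiber Δ φ y₀ => ρ x.1)
    have hev : ∀ᶠ s : Finset (Fiber Δ φ y₀) in Filter.atTop,
        (∑' x : {x : Fiber Δ φ y₀ // x ∉ s}, ρ x.1.1) < ε / 2 := by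
      have : Set.Iio (ε / 2) ∈ 𝓝 (0 : ℝ) := Iio_mem_nhds (by linarith)
      exact htail this
    obtain ⟨s₀, hs₀⟩ := Filter.eventually_atTop.1 hev
    set t : Finset (Fiber Δ φ y₀) := insert x₀p s₀ with ht
    have hts : (∑' x : {x : Fiber Δ φ y₀ // x ∉ t}, ρ x.1.1) < ε / 2 :=
      hs₀ t (Finset.subset_insert _ _)
    -- exclusion set: fiber points in t other than x₀
    set E : Finset X := (t.image Subtype.val).erase x₀ with hE
    set U : Set X := Δ \ (E : Set X) with hU
    have hUopen : IsOpen U := hΔ.sdiff (Set.Finite.isClosed (E.finite_toSet))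
    have hx₀U : x₀ ∈ U := ⟨hx₀, by simp [hE]⟩
    obtain ⟨K, hK, hx₀K, hKU⟩ := exists_compact_subset hUopen hx₀U
    -- Urysohn function
    obtain ⟨f, hf1, hf0, hfc, hf01⟩ :=
      exists_continuous_one_zero_of_isCompact hK hUopen.isClosed_compl
        (Set.disjoint_left.2 fun x hx hxc => hxc (hKU hx))
    -- build a ∈ C₀(X, ℂ)
    have hfz : ∀ x ∉ Δ, (f x : ℂ) = 0 := by
      intro x hx
      have : x ∈ Uᶜ := fun hxU => hx hxU.1
      simp [hf0 this]
    set a : C₀(X, ℂ) :=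
      { toFun := fun x => (f x : ℂ)
        continuous_toFun := Complex.continuous_ofReal.comp f.continuous
        zero_at_infty' := by
          have : HasCompactSupport (fun x => (f x : ℂ)) :=
            hfc.comp_left (g := (Complex.ofReal : ℝ → ℂ)) Complex.ofReal_zero
          exact this.is_zero_at_infty } with ha
    obtain ⟨b, hb⟩ := hL a hfz
    -- real version of b
    have hsummf : ∀ y : X, Summable fun x : Fiber Δ φ y => ρ x.1 * f x.1 := by
      intro y
      refine Summable.of_nonneg_of_le (fun x => ?_) (fun x => ?_) (hsum y)
      · exact mul_nonneg (hnn x.1 x.2.1) (hf01 x.1).1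
      · nth_rewrite 2 [← mul_one (ρ x.1)]
        exact mul_le_mul_of_nonneg_left (hf01 x.1).2 (hnn x.1 x.2.1)
    have hbre : ∀ y : X, b y = ((∑' x : Fiber Δ φ y, ρ x.1 * f x.1 : ℝ) : ℂ) := by
      intro y
      rw [hb y, Complex.ofReal_tsum]
      push_cast
      rfl
    set S : X → ℝ := fun y => ∑' x : Fiber Δ φ y, ρ x.1 * f x.1 with hS
    have hScont : Continuous S := by
      have : S = fun y => (b y).re := by
        funext y; rw [hbre y, Complex.ofReal_re]
      rw [this]
      exact Complex.continuous_re.comp (map_continuous b)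
    -- pointwise lower bound on interior K ∩ Δ
    have hlow : ∀ x ∈ Δ, x ∈ interior K → ρ x ≤ S (φ x) := by
      intro x hxΔ hxK
      have hxf : x ∈ Fiber Δ φ (φ x) := ⟨hxΔ, rfl⟩
      have h1 : f x = 1 := hf1 (interior_subset hxK)
      have := Summable.le_tsum (hsummf (φ x)) ⟨x, hxf⟩
        (fun j _ => mul_nonneg (hnn j.1 j.2.1) (hf01 j.1).1)
      simpa [h1] using this
    -- upper bound at y₀
    have hupp : S y₀ ≤ ρ x₀ + ε / 2 := by
      have hsplit := Summable.sum_add_tsum_compl (s := t) (hsummf y₀)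
      have hsum_t : (∑ x ∈ t, ρ x.1 * f x.1) = ρ x₀ * f x₀ := by
        rw [Finset.sum_eq_single x₀p]
        · intro c hc hne
          have hcE : c.1 ∈ E := by
            rw [hE]
            refine Finset.mem_erase.2 ⟨?_, Finset.mem_image_of_mem _ hc⟩
            intro hcx
            exact hne (Subtype.ext hcx)
          have : c.1 ∈ Uᶜ := fun hcU => hcU.2 hcE
          simp [hf0 this]
        · intro h
          exact absurd (by rw [ht]; exact Finset.mem_insert_self _ _) h
      have h1 : f x₀ = 1 := hf1 (interior_subset hx₀K)
      have htail_le : (∑' x : {x : Fiber Δ φ y₀ // x ∉ t}, ρ x.1.1 * f x.1.1) ≤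
          ∑' x : {x : Fiber Δ φ y₀ // x ∉ t}, ρ x.1.1 := by
        refine Summable.tsum_le_tsum (fun x => ?_) ((hsummf y₀).subtype _) ((hsum y₀).subtype _)
        nth_rewrite 2 [← mul_one (ρ x.1.1)]
        exact mul_le_mul_of_nonneg_left (hf01 x.1.1).2 (hnn x.1.1 x.1.2.1)
      calc S y₀ = (∑ x ∈ t, ρ x.1 * f x.1) +
            ∑' x : {x : Fiber Δ φ y₀ // x ∉ t}, ρ x.1.1 * f x.1.1 := hsplit.symm
        _ ≤ ρ x₀ * f x₀ + ε / 2 := by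
            refine add_le_add (le_of_eq hsum_t) (le_of_lt (lt_of_le_of_lt htail_le hts))
        _ = ρ x₀ + ε / 2 := by rw [h1, mul_one]
    -- conclude
    have hSφ : ContinuousWithinAt (S ∘ φ) Δ x₀ :=
      (hScont.continuousAt).comp_continuousWithinAt (hφ x₀ hx₀)
    have hSlt : S y₀ < ρ x₀ + ε := lt_of_le_of_lt hupp (by linarith)
    have hev1 : ∀ᶠ x in nhdsWithin x₀ Δ, S (φ x) < ρ x₀ + ε := by
      have := hSφ (Iio_mem_nhds (show S (φ x₀) < ρ x₀ + ε from hSlt))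
      exact this
    have hev2 : ∀ᶠ x in nhdsWithin x₀ Δ, x ∈ interior K :=
      mem_nhdsWithin_of_mem_nhds (isOpen_interior.mem_nhds hx₀K)
    have hev3 : ∀ᶠ x in nhdsWithin x₀ Δ, x ∈ Δ := eventually_mem_nhdsWithin
    filter_upwards [hev1, hev2, hev3] with x h1 h2 h3
    exact lt_of_le_of_lt (hlow x h3 h2) h1
  constructor
  · intro x₀ hx₀ y hy
    have hε : (0 : ℝ) < y - ρ x₀ := sub_pos.2 hy
    filter_upwards [main x₀ hx₀ (y - ρ x₀) hε] with x hx
    linarith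
  · intro x₀ hx₀ h0
    rw [ContinuousWithinAt, h0]
    rw [Metric.tendsto_nhds]
    intro ε hε
    filter_upwards [main x₀ hx₀ ε hε, eventually_mem_nhdsWithin] with x hx hxΔ
    rw [Real.dist_eq, abs_sub_lt_iff]
    constructor
    · rw [h0] at hx; linarith
    · have := hnn x hxΔ; linarith
end
end

section
/- Let x₀ ∈ Δ with ρ(x₀) > 0. The following are equivalent: (1) ρ is continuous at x₀; (2) φ is locally injective at x₀, i.e. there is an open set U ⊆ Δ with x₀ ∈ U such that the restriction φ|_U is injective; (3) x₀ is a local homeomorphism point for φ, i.e. there is an open set U ⊆ Δ with x₀ ∈ U such that φ(U) is open in X and φ restricted to U is a homeomorphism onto φ(U). -/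
open scoped ZeroAtInfty

noncomputable section

variable {X : Type*} [TopologicalSpace X]

open Set Filter

/-- Bump function in a locally compact Hausdorff space. -/
lemma bump_aux [LocallyCompactSpace X] [T2Space X]
    {V : Set X} (hV : IsOpen V) {x₀ : X} (hx₀ : x₀ ∈ V) :
    ∃ (f : X → ℝ) (W : Set X), Continuous f ∧ HasCompactSupport f ∧
      (∀ x, 0 ≤ f x) ∧ (∀ x, f x ≤ 1) ∧ IsOpen W ∧ x₀ ∈ W ∧
      (∀ x ∈ W, f x = 1) ∧ (∀ x ∉ V, f x = 0) := by
  obtain ⟨K, hK, hxK, hKV⟩ := exists_compact_subset hV hx₀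
  obtain ⟨f, hf1, hf0, hfc, hf01⟩ := exists_continuous_one_zero_of_isCompact hK
    hV.isClosed_compl (Set.disjoint_left.mpr fun x hxK hxV => hxV (hKV hxK))
  exact ⟨f, interior K, f.continuous, hfc, fun x => (hf01 x).1, fun x => (hf01 x).2,
    isOpen_interior, hxK, fun x hx => hf1 (interior_subset hx), fun x hx => hf0 hx⟩

/-- The real transfer of a compactly supported `[0,1]`-valued function is continuous. -/
lemma transfer_aux {Δ : Set X} {φ : X → X} {ρ : X → ℝ} {M : ℝ}
    (hpot : IsPotential Δ φ ρ M) {f : X → ℝ} (hfc : Continuous f)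
    (hfcs : HasCompactSupport f) (hf0 : ∀ x, 0 ≤ f x) (hf1 : ∀ x, f x ≤ 1)
    (hsupp : ∀ x ∉ Δ, f x = 0) :
    ∃ g : X → ℝ, Continuous g ∧ ∀ y, g y = ∑' x : Fiber Δ φ y, ρ x.1 * f x.1 := by
  have hsf : ∀ y, Summable fun x : Fiber Δ φ y => ρ x.1 * f x.1 := fun y =>
    Summable.of_nonneg_of_le (fun x => mul_nonneg (hpot.1 x.1 x.2.1) (hf0 _))
      (fun x => mul_le_of_le_one_right (hpot.1 x.1 x.2.1) (hf1 _)) (hpot.2.1 y)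
  have hcs : HasCompactSupport (fun x => (f x : ℂ)) :=
    hfcs.comp_left (g := fun r : ℝ => (r : ℂ)) Complex.ofReal_zero
  set a : C₀(X, ℂ) := ⟨⟨fun x => (f x : ℂ), Complex.continuous_ofReal.comp hfc⟩,
    hcs.is_zero_at_infty⟩ with ha
  obtain ⟨b, hb⟩ := hpot.2.2.2 a (fun x hx => by simp [ha, hsupp x hx])
  refine ⟨fun y => (b y).re, Complex.continuous_re.comp b.continuous, fun y => ?_⟩
  have h2 : ((∑' x : Fiber Δ φ y, ρ x.1 * f x.1 : ℝ) : ℂ)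
      = ∑' x : Fiber Δ φ y, ((ρ x.1 * f x.1 : ℝ) : ℂ) := by
    simpa using Complex.ofRealCLM.map_tsum (hsf y)
  have : b y = ((∑' x : Fiber Δ φ y, ρ x.1 * f x.1 : ℝ) : ℂ) := by
    rw [hb y, h2]
    exact tsum_congr fun x => by rw [Complex.ofReal_mul]; rfl
  show (b y).re = _
  rw [this, Complex.ofReal_re]

/-- If `φ` is injective on an open `U ∋ x₀`, there is `g` continuous and `W ∋ x₀` open,
`W ⊆ U`, with `ρ = g ∘ φ` on `W`. -/
lemma exists_g_aux [LocallyCompactSpace X] [T2Space X]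
    {Δ : Set X} {φ : X → X} {ρ : X → ℝ} {M : ℝ}
    (hpot : IsPotential Δ φ ρ M)
    {U : Set X} (hUo : IsOpen U) {x₀ : X} (hxU : x₀ ∈ U) (hUΔ : U ⊆ Δ)
    (hUinj : Set.InjOn φ U) :
    ∃ (g : X → ℝ) (W : Set X), Continuous g ∧ IsOpen W ∧ x₀ ∈ W ∧ W ⊆ U ∧
      ∀ x ∈ W, ρ x = g (φ x) := by
  classical
  obtain ⟨f, W, hfc, hfcs, hf0, hf1, hWo, hxW, hfW, hfV⟩ := bump_aux hUo hxU
  have hWU : W ⊆ U := fun x hx => by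
    by_contra h
    have := hfV x h
    rw [hfW x hx] at this
    norm_num at this
  obtain ⟨g, hgc, hgy⟩ := transfer_aux hpot hfc hfcs hf0 hf1
    (fun x hx => hfV x (fun h => hx (hUΔ h)))
  have hsf : ∀ y, Summable fun x : Fiber Δ φ y => ρ x.1 * f x.1 := fun y =>
    Summable.of_nonneg_of_le (fun x => mul_nonneg (hpot.1 x.1 x.2.1) (hf0 _))
      (fun x => mul_le_of_le_one_right (hpot.1 x.1 x.2.1) (hf1 _)) (hpot.2.1 y)
  refine ⟨g, W, hgc, hWo, hxW, hWU, fun x hx => ?_⟩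
  have hxU' : x ∈ U := hWU hx
  have hxΔ : x ∈ Δ := hUΔ hxU'
  have hp : (⟨x, hxΔ, rfl⟩ : Fiber Δ φ (φ x)) ∈ (Set.univ : Set (Fiber Δ φ (φ x))) :=
    Set.mem_univ _
  rw [hgy, Summable.tsum_eq_add_tsum_ite (hsf (φ x)) ⟨x, hxΔ, rfl⟩]
  have hz : ∀ q : Fiber Δ φ (φ x),
      (if q = (⟨x, hxΔ, rfl⟩ : Fiber Δ φ (φ x)) then 0 else ρ q.1 * f q.1) = 0 := by
    intro q
    split
    · rfl
    · rename_i hq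
      by_cases hfq : f q.1 = 0
      · simp [hfq]
      · exfalso
        have hqU : q.1 ∈ U := by
          by_contra h
          exact hfq (hfV _ h)
        exact hq (Subtype.ext (hUinj hqU hxU' q.2.2))
  rw [tsum_congr hz, tsum_zero, hfW x hx]
  ring

/-- Positivity of a potential makes `φ` open on sets where `ρ > 0`. -/
lemma open_image_aux [LocallyCompactSpace X] [T2Space X]
    {Δ : Set X} {φ : X → X} {ρ : X → ℝ} {M : ℝ}
    (hpot : IsPotential Δ φ ρ M)
    {V : Set X} (hVo : IsOpen V) (hVΔ : V ⊆ Δ) (hρpos : ∀ x ∈ V, 0 < ρ x) :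
    IsOpen (φ '' V) := by
  rw [isOpen_iff_forall_mem_open]
  rintro y ⟨x, hxV, rfl⟩
  obtain ⟨b, W, hbc, hbcs, hb0, hb1, hWo, hxW, hbW, hbV⟩ := bump_aux hVo hxV
  obtain ⟨h, hhc, hhy⟩ := transfer_aux hpot hbc hbcs hb0 hb1
    (fun z hz => hbV z (fun hzV => hz (hVΔ hzV)))
  have hsb : ∀ y, Summable fun q : Fiber Δ φ y => ρ q.1 * b q.1 := fun y =>
    Summable.of_nonneg_of_le (fun q => mul_nonneg (hpot.1 q.1 q.2.1) (hb0 _))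
      (fun q => mul_le_of_le_one_right (hpot.1 q.1 q.2.1) (hb1 _)) (hpot.2.1 y)
  refine ⟨{y' | 0 < h y'}, ?_, isOpen_lt continuous_const hhc, ?_⟩
  · intro y' hy'
    by_contra hy''
    have hz : ∀ q : Fiber Δ φ y', ρ q.1 * b q.1 = 0 := by
      intro q
      by_cases hbq : b q.1 = 0
      · simp [hbq]
      · exfalso
        refine hy'' ⟨q.1, ?_, q.2.2⟩
        by_contra h
        exact hbq (hbV _ h)
    have : h y' = 0 := by rw [hhy, tsum_congr hz, tsum_zero]
    rw [Set.mem_setOf_eq, this] at hy'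
    exact lt_irrefl 0 hy'
  · have hle : ρ x * b x ≤ h (φ x) := by
      rw [hhy]
      exact Summable.le_tsum (hsb (φ x)) (⟨x, hVΔ hxV, rfl⟩ : Fiber Δ φ (φ x))
        (fun q _ => mul_nonneg (hpot.1 q.1 q.2.1) (hb0 _))
    have : 0 < ρ x * b x := by
      rw [hbW x hxW, mul_one]
      exact hρpos x hxV
    exact lt_of_lt_of_le this hle

lemma locInj_of_cont [LocallyCompactSpace X] [T2Space X]
    {Δ : Set X} {φ : X → X} {ρ : X → ℝ} {M : ℝ}
    (hΔ : IsOpen Δ) (hφ : ContinuousOn φ Δ)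
    (hpot : IsPotential Δ φ ρ M)
    {x₀ : X} (hx₀ : x₀ ∈ Δ) (hρx₀ : 0 < ρ x₀)
    (hcont : ContinuousWithinAt ρ Δ x₀) :
    ∃ U : Set X, IsOpen U ∧ x₀ ∈ U ∧ U ⊆ Δ ∧ Set.InjOn φ U := by
  classical
  obtain ⟨hρ0, hsum, hbd, hL⟩ := hpot
  set y₀ := φ x₀ with hy₀
  -- a neighbourhood where ρ > (3/4) ρ x₀
  have h34 : ρ ⁻¹' Set.Ioi (3 / 4 * ρ x₀) ∈ nhdsWithin x₀ Δ :=
    hcont (Ioi_mem_nhds (by linarith))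
  obtain ⟨t, ht_open, hxt, ht⟩ := mem_nhdsWithin.mp h34
  -- a finite subset of the fibre outside of which the sum is small
  have htail := (tendsto_order.1
    (tendsto_tsum_compl_atTop_zero (fun x : Fiber Δ φ y₀ => ρ x.1))).2 _
    (show (0:ℝ) < ρ x₀ / 4 by linarith)
  obtain ⟨T, hT⟩ := htail.exists
  set x₀p : Fiber Δ φ y₀ := ⟨x₀, hx₀, rfl⟩ with hx₀p
  -- exceptional finite set
  set E : Set X := (Subtype.val '' (↑T : Set (Fiber Δ φ y₀))) \ {x₀} with hE
  have hEfin : E.Finite := (T.finite_toSet.image _).subset Set.diff_subset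
  have hV₂o : IsOpen ((t ∩ Δ) \ E) := (ht_open.inter hΔ).sdiff hEfin.isClosed
  have hxV₂ : x₀ ∈ (t ∩ Δ) \ E := ⟨⟨hxt, hx₀⟩, fun h => h.2 rfl⟩
  obtain ⟨f, W, hfc, hfcs, hf0, hf1, hWo, hxW, hfW, hfV⟩ := bump_aux hV₂o hxV₂
  have hsupp : ∀ x ∉ Δ, f x = 0 := fun x hx => hfV x (fun h => hx h.1.2)
  obtain ⟨g, hgc, hgy⟩ := transfer_aux ⟨hρ0, hsum, hbd, hL⟩ hfc hfcs hf0 hf1 hsupp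
  have hsf : ∀ y, Summable fun x : Fiber Δ φ y => ρ x.1 * f x.1 := fun y =>
    Summable.of_nonneg_of_le (fun x => mul_nonneg (hρ0 x.1 x.2.1) (hf0 _))
      (fun x => mul_le_of_le_one_right (hρ0 x.1 x.2.1) (hf1 _)) (hsum y)
  -- key bound at y₀
  have hkey : g y₀ < 3 / 2 * ρ x₀ := by
    rw [hgy]
    rw [← Summable.sum_add_tsum_compl (s := T) (hsf y₀)]
    have h1 : ∑ x ∈ T, ρ x.1 * f x.1 ≤ ρ x₀ := by
      have hb : ∀ x ∈ T, ρ x.1 * f x.1 ≤ if x = x₀p then ρ x₀ else 0 := by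
        intro x hx
        by_cases hxx : x = x₀p
        · subst hxx
          simp only [if_pos]
          calc ρ (x₀p : X) * f (x₀p : X) ≤ ρ (x₀p : X) * 1 :=
                mul_le_mul_of_nonneg_left (hf1 _) (hρ0 _ hx₀)
            _ = ρ x₀ := by rw [mul_one]
        · have hne : (x : X) ≠ x₀ := fun h => hxx (Subtype.ext h)
          have hmE : (x : X) ∈ E := ⟨⟨x, by exact_mod_cast hx, rfl⟩, hne⟩
          have : f (x : X) = 0 := hfV _ (fun hmem => hmem.2 hmE)
          simp [this, hxx]
      calc ∑ x ∈ T, ρ x.1 * f x.1 ≤ ∑ x ∈ T, (if x = x₀p then ρ x₀ else 0) :=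
            Finset.sum_le_sum hb
        _ ≤ ρ x₀ := by
            rw [Finset.sum_ite_eq' T x₀p fun _ => ρ x₀]
            split <;> simp [hρx₀.le]
    have h2 : ∑' x : ↑(↑T : Set (Fiber Δ φ y₀))ᶜ, ρ x.1.1 * f x.1.1 < ρ x₀ / 4 := by
      have hle : ∑' x : ↑(↑T : Set (Fiber Δ φ y₀))ᶜ, ρ x.1.1 * f x.1.1
          ≤ ∑' x : ↑(↑T : Set (Fiber Δ φ y₀))ᶜ, ρ x.1.1 :=
        Summable.tsum_le_tsum (fun x => mul_le_of_le_one_right (hρ0 x.1.1 x.1.2.1) (hf1 _))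
          ((hsf y₀).subtype _) ((hsum y₀).subtype _)
      exact lt_of_le_of_lt (hle.trans (le_of_eq (by rfl))) hT
    linarith
  -- the open set
  have hA : IsOpen {y | g y < 3 / 2 * ρ x₀} := isOpen_lt hgc continuous_const
  have hO : IsOpen (Δ ∩ φ ⁻¹' {y | g y < 3 / 2 * ρ x₀}) :=
    hφ.isOpen_inter_preimage hΔ hA
  refine ⟨W ∩ (t ∩ Δ) ∩ (Δ ∩ φ ⁻¹' {y | g y < 3 / 2 * ρ x₀}),
    (hWo.inter (ht_open.inter hΔ)).inter hO, ⟨⟨hxW, hxt, hx₀⟩, hx₀, hkey⟩,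
    fun x hx => hx.1.2.2, ?_⟩
  rintro x₁ ⟨⟨hW₁, ht₁, hΔ₁⟩, -, hg₁⟩ x₂ ⟨⟨hW₂, ht₂, hΔ₂⟩, -, -⟩ hφeq
  by_contra hne
  have hp₁ : (⟨x₁, hΔ₁, rfl⟩ : Fiber Δ φ (φ x₁)) ≠ ⟨x₂, hΔ₂, hφeq.symm⟩ :=
    fun h => hne (congrArg Subtype.val h)
  have hsum2 : ρ x₁ * f x₁ + ρ x₂ * f x₂ ≤ g (φ x₁) := by
    rw [hgy]
    have := Summable.sum_le_tsum
      ({⟨x₁, hΔ₁, rfl⟩, ⟨x₂, hΔ₂, hφeq.symm⟩} : Finset (Fiber Δ φ (φ x₁)))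
      (fun q _ => mul_nonneg (hρ0 q.1 q.2.1) (hf0 _)) (hsf (φ x₁))
    rwa [Finset.sum_pair hp₁] at this
  rw [hfW x₁ hW₁, hfW x₂ hW₂, mul_one, mul_one] at hsum2
  have hρ₁ : 3 / 4 * ρ x₀ < ρ x₁ := ht ⟨ht₁, hΔ₁⟩
  have hρ₂ : 3 / 4 * ρ x₀ < ρ x₂ := ht ⟨ht₂, hΔ₂⟩
  have : g (φ x₁) < 3 / 2 * ρ x₀ := hg₁
  linarith

/-- For `x₀ ∈ Δ` with `ρ(x₀) > 0`: continuity of `ρ` at `x₀` is equivalent to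
local injectivity of `φ` at `x₀`, which is in turn equivalent to `x₀` being a local
homeomorphism point for `φ`. -/
theorem continuity_iff_locallyInjective_iff_localHomeoPoint
    {X : Type*} [TopologicalSpace X] [LocallyCompactSpace X] [T2Space X]
    (Δ : Set X) (φ : X → X) (ρ : X → ℝ) (M : ℝ)
    (hΔ : IsOpen Δ) (hφ : ContinuousOn φ Δ)
    (hcount : ∀ y : X, (Fiber Δ φ y).Countable)
    (hpot : IsPotential Δ φ ρ M)
    (x₀ : X) (hx₀ : x₀ ∈ Δ) (hρx₀ : 0 < ρ x₀) :
    ((ContinuousWithinAt ρ Δ x₀) ↔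
      ∃ U : Set X, IsOpen U ∧ x₀ ∈ U ∧ U ⊆ Δ ∧ Set.InjOn φ U) ∧
    ((∃ U : Set X, IsOpen U ∧ x₀ ∈ U ∧ U ⊆ Δ ∧ Set.InjOn φ U) ↔
      ∃ U : Set X, IsOpen U ∧ x₀ ∈ U ∧ U ⊆ Δ ∧ Set.InjOn φ U ∧ IsOpen (φ '' U) ∧
        ∀ V ⊆ U, IsOpen V → IsOpen (φ '' V)) := by
  constructor
  · constructor
    · exact fun h => locInj_of_cont hΔ hφ hpot hx₀ hρx₀ h
    · rintro ⟨U, hUo, hxU, hUΔ, hUinj⟩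
      obtain ⟨g, W, hgc, hWo, hxW, hWU, hkey⟩ := exists_g_aux hpot hUo hxU hUΔ hUinj
      have hgφ : ContinuousWithinAt (g ∘ φ) Δ x₀ :=
        hgc.continuousAt.comp_continuousWithinAt (hφ x₀ hx₀)
      refine hgφ.congr_of_eventuallyEq ?_ (hkey x₀ hxW)
      filter_upwards [mem_nhdsWithin_of_mem_nhds (hWo.mem_nhds hxW)] with x hx
      exact hkey x hx
  · constructor
    · rintro ⟨U, hUo, hxU, hUΔ, hUinj⟩
      obtain ⟨g, W, hgc, hWo, hxW, hWU, hkey⟩ := exists_g_aux hpot hUo hxU hUΔ hUinj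
      have hU'o : IsOpen (W ∩ (Δ ∩ φ ⁻¹' {y | 0 < g y})) :=
        hWo.inter (hφ.isOpen_inter_preimage hΔ (isOpen_lt continuous_const hgc))
      have hxU' : x₀ ∈ W ∩ (Δ ∩ φ ⁻¹' {y | 0 < g y}) :=
        ⟨hxW, hx₀, show 0 < g (φ x₀) by rw [← hkey x₀ hxW]; exact hρx₀⟩
      have hU'Δ : W ∩ (Δ ∩ φ ⁻¹' {y | 0 < g y}) ⊆ Δ := fun x hx => hx.2.1
      have hρpos : ∀ x ∈ W ∩ (Δ ∩ φ ⁻¹' {y | 0 < g y}), 0 < ρ x := fun x hx => by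
        rw [hkey x hx.1]; exact hx.2.2
      exact ⟨W ∩ (Δ ∩ φ ⁻¹' {y | 0 < g y}), hU'o, hxU', hU'Δ,
        hUinj.mono (fun x hx => hWU hx.1), open_image_aux hpot hU'o hU'Δ hρpos,
        fun V hVU' hVo => open_image_aux hpot hVo (hVU'.trans hU'Δ)
          (fun x hx => hρpos x (hVU' hx))⟩
    · rintro ⟨U, h1, h2, h3, h4, -, -⟩
      exact ⟨U, h1, h2, h3, h4⟩
end
end

section
/- The restriction of φ to Δ_pos is an open map into X: for every open set U ⊆ Δ, the image φ(U ∩ Δ_pos) is open in X. -/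
open scoped ZeroAtInfty

noncomputable section

variable {X : Type*} [TopologicalSpace X]

/-- The restriction of `φ` to `Δ_pos` is an open map into `X`. -/
theorem restriction_to_Dpos_isOpenMap
    {X : Type*} [TopologicalSpace X] [LocallyCompactSpace X] [T2Space X]
    (Δ : Set X) (φ : X → X) (ρ : X → ℝ) (M : ℝ)
    (hΔ : IsOpen Δ) (hφ : ContinuousOn φ Δ)
    (hcount : ∀ y : X, (Fiber Δ φ y).Countable)
    (hpot : IsPotential Δ φ ρ M) :
    ∀ U : Set X, IsOpen U → U ⊆ Δ → IsOpen (φ '' (U ∩ Dpos Δ ρ)) := by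
  intro U hU hUΔ
  rw [isOpen_iff_forall_mem_open]
  rintro y₀ ⟨x₀, ⟨hx₀U, hx₀Δ, hx₀ρ⟩, hφx₀⟩
  -- bump function at x₀ supported in U
  obtain ⟨f, hf1, hf0, hfc, hf01⟩ :=
    exists_continuous_one_zero_of_isCompact (isCompact_singleton (x := x₀))
      hU.isClosed_compl (Set.disjoint_left.2 (by simp [hx₀U]))
  -- package as a C₀ function with complex values
  have hfz : Filter.Tendsto (fun x => ((f x : ℂ))) (Filter.cocompact X) (nhds 0) := by
    have : HasCompactSupport (fun x => ((f x : ℂ))) := by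
      apply HasCompactSupport.comp_left hfc (g := (fun r : ℝ => (r : ℂ)))
      simp
    simpa using this.is_zero_at_infty
  let a : C₀(X, ℂ) := ⟨⟨fun x => (f x : ℂ), by fun_prop⟩, hfz⟩
  have haΔ : ∀ x ∉ Δ, a x = 0 := by
    intro x hx
    have : x ∈ Uᶜ := fun h => hx (hUΔ h)
    simp only [a, ZeroAtInftyContinuousMap.coe_mk, ContinuousMap.coe_mk]
    exact_mod_cast congrArg Complex.ofReal (hf0 this)
  obtain ⟨b, hb⟩ := hpot.2.2.2 a haΔ
  -- summability of ρ * f on each fiber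
  have hsum : ∀ y : X, Summable fun x : Fiber Δ φ y => ρ x.1 * f x.1 := by
    intro y
    apply Summable.of_nonneg_of_le (fun x => mul_nonneg (hpot.1 x.1 x.2.1) (hf01 x.1).1)
      (fun x => ?_) (hpot.2.1 y)
    calc ρ x.1 * f x.1 ≤ ρ x.1 * 1 :=
          mul_le_mul_of_nonneg_left (hf01 x.1).2 (hpot.1 x.1 x.2.1)
      _ = ρ x.1 := mul_one _
  have hre : ∀ y : X, (b y).re = ∑' x : Fiber Δ φ y, ρ x.1 * f x.1 := by
    intro y
    rw [hb y]
    have hs : Summable fun x : Fiber Δ φ y => (ρ x.1 : ℂ) * (a x.1) := by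
      have := (Complex.summable_ofReal (f := fun x : Fiber Δ φ y => ρ x.1 * f x.1)).2 (hsum y)
      convert this using 2 with x
      push_cast
      rfl
    rw [Complex.re_tsum hs]
    congr 1 with x
    simp [a]
  -- the open neighborhood
  refine ⟨(fun y => (b y).re) ⁻¹' Set.Ioi 0, ?_, ?_, ?_⟩
  · -- V ⊆ image
    intro y hy
    have hy' : (0 : ℝ) < ∑' x : Fiber Δ φ y, ρ x.1 * f x.1 := by
      rw [← hre y]; exact hy
    have : ∃ x : Fiber Δ φ y, ρ x.1 * f x.1 ≠ 0 := by
      by_contra h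
      push_neg at h
      have hz : (∑' x : Fiber Δ φ y, ρ x.1 * f x.1) = 0 := by
        rw [tsum_congr h]; exact tsum_zero
      exact lt_irrefl 0 (hz ▸ hy')
    obtain ⟨x, hx⟩ := this
    have hρx : ρ x.1 ≠ 0 := fun h => hx (by simp [h])
    have hfx : f x.1 ≠ 0 := fun h => hx (by simp [h])
    have hxU : x.1 ∈ U := by
      by_contra h
      exact hfx (hf0 h)
    exact ⟨x.1, ⟨hxU, x.2.1, lt_of_le_of_ne (hpot.1 x.1 x.2.1) (Ne.symm hρx)⟩, x.2.2⟩
  · -- open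
    exact isOpen_Ioi.preimage (Complex.continuous_re.comp b.continuous)
  · -- y₀ ∈ V
    have hx₀fib : x₀ ∈ Fiber Δ φ y₀ := ⟨hx₀Δ, hφx₀⟩
    have : ρ x₀ * f x₀ ≤ ∑' x : Fiber Δ φ y₀, ρ x.1 * f x.1 :=
      Summable.le_tsum (hsum y₀) ⟨x₀, hx₀fib⟩
        (fun x _ => mul_nonneg (hpot.1 x.1 x.2.1) (hf01 x.1).1)
    have hfx₀ : f x₀ = 1 := hf1 rfl
    simp only [Set.mem_preimage, Set.mem_Ioi, hre y₀]
    calc (0 : ℝ) < ρ x₀ * f x₀ := by rw [hfx₀]; simpa using hx₀ρ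
      _ ≤ _ := this
end
end

section
/- For any x₀ ∈ Δ and any ε > 0 there is an open neighbourhood U₀ ⊆ Δ of x₀ such that for every open set U with x₀ ∈ U ⊆ U₀ there is an open neighbourhood V of φ(x₀) in X with | Σ_{x ∈ U ∩ φ⁻¹(y)} ρ(x) − ρ(x₀) | < ε for all y ∈ V. -/
open scoped ZeroAtInfty

noncomputable section

variable {X : Type*} [TopologicalSpace X]

open Set

set_option linter.unusedSectionVars false in
private lemma summable_of_subset' {ρ : X → ℝ} {S S' : Set X}
    (h : Summable fun x : S => ρ x) (hss : S' ⊆ S) :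
    Summable fun x : S' => ρ x := by
  have h' : Summable (S.indicator ρ) := summable_subtype_iff_indicator.mp h
  have : S'.indicator ρ = S'.indicator (S.indicator ρ) := by
    rw [Set.indicator_indicator, Set.inter_eq_self_of_subset_left hss]
  exact summable_subtype_iff_indicator.mpr (this ▸ h'.indicator S')

set_option linter.unusedSectionVars false in
private lemma tsum_split_set' {ρ : X → ℝ} {S : Set X} (A : Set X)
    (h : Summable fun x : S => ρ x) :
    (∑' x : S, ρ x) = (∑' x : ↥(S ∩ A), ρ x) + ∑' x : ↥(S \ A), ρ x := by
  have h1 : Summable fun x : ↥(S ∩ A) => ρ x := summable_of_subset' h inter_subset_left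
  have h2 : Summable fun x : ↥(S \ A) => ρ x := summable_of_subset' h diff_subset
  rw [tsum_subtype, tsum_subtype, tsum_subtype]
  rw [← Summable.tsum_add (summable_subtype_iff_indicator.mp h1) (summable_subtype_iff_indicator.mp h2)]
  apply tsum_congr
  intro x
  by_cases hxS : x ∈ S <;> by_cases hxA : x ∈ A <;>
    simp [Set.indicator_apply, hxS, hxA]

set_option maxHeartbeats 1000000 in
/-- Continuity-of-measures lemma: for `x₀ ∈ Δ` and `ε > 0` there is a
neighbourhood `U₀` of `x₀` such that for every open `U` with `x₀ ∈ U ⊆ U₀` there is a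
neighbourhood `V` of `φ(x₀)` with `|Σ_{x ∈ U ∩ φ⁻¹(y)} ρ(x) − ρ(x₀)| < ε` for all `y ∈ V`. -/
theorem continuity_of_measures
    {X : Type*} [TopologicalSpace X] [LocallyCompactSpace X] [T2Space X]
    (Δ : Set X) (φ : X → X) (ρ : X → ℝ) (M : ℝ)
    (hΔ : IsOpen Δ) (hφ : ContinuousOn φ Δ)
    (hcount : ∀ y : X, (Fiber Δ φ y).Countable)
    (hpot : IsPotential Δ φ ρ M)
    (x₀ : X) (hx₀ : x₀ ∈ Δ) (ε : ℝ) (hε : 0 < ε) :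
    ∃ U₀ : Set X, IsOpen U₀ ∧ x₀ ∈ U₀ ∧ U₀ ⊆ Δ ∧
      ∀ U : Set X, IsOpen U → x₀ ∈ U → U ⊆ U₀ →
        ∃ V : Set X, IsOpen V ∧ φ x₀ ∈ V ∧
          ∀ y ∈ V, |(∑' x : ↥(Fiber Δ φ y ∩ U), ρ x.1) - ρ x₀| < ε := by
  classical
  obtain ⟨hnn, hsum, hbdd, hL⟩ := hpot
  set y₀ := φ x₀ with hy₀
  have hx₀T : x₀ ∈ Fiber Δ φ y₀ := ⟨hx₀, rfl⟩
  have hε3 : (0 : ℝ) < ε / 3 := by linarith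
  -- a finite subset of the fibre over y₀ with small tail
  obtain ⟨s, hs⟩ : ∃ s : Finset (Fiber Δ φ y₀),
      (∑' x : {x : Fiber Δ φ y₀ // x ∉ s}, ρ x.1.1) < ε / 3 := by
    have h := tendsto_tsum_compl_atTop_zero (fun x : Fiber Δ φ y₀ => ρ x.1)
    exact (h.eventually_lt_const hε3).exists
  set F : Finset X := insert x₀ (s.image (fun x => x.1)) with hF
  have hx₀F : x₀ ∈ F := Finset.mem_insert_self _ _
  have htail : (∑' x : ↥(Fiber Δ φ y₀ \ ↑F), ρ x.1) < ε / 3 := by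
    refine lt_of_le_of_lt ?_ hs
    refine Summable.tsum_le_tsum_of_inj
      (fun x => ⟨⟨x.1, x.2.1⟩, fun hmem => x.2.2 ?_⟩)
      (fun u v huv => ?_) (fun c _ => hnn _ c.1.2.1) (fun _ => le_rfl)
      (summable_of_subset' (hsum y₀) diff_subset) ?_
    · exact Finset.mem_insert_of_mem (Finset.mem_image.2 ⟨⟨x.1, x.2.1⟩, hmem, rfl⟩)
    · exact Subtype.ext (congrArg (fun z => z.1.1) huv)
    · exact (hsum y₀).subtype _
  -- compact neighbourhoods avoiding F \ {x₀}
  have hFclosed : IsClosed (↑(F.erase x₀) : Set X) := (F.erase x₀).finite_toSet.isClosed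
  have hopen1 : IsOpen (Δ \ ↑(F.erase x₀)) := hΔ.sdiff hFclosed
  have hx₀1 : x₀ ∈ Δ \ ↑(F.erase x₀) := ⟨hx₀, by simp⟩
  obtain ⟨K₀, hK₀c, hx₀K₀, hK₀sub⟩ := exists_compact_subset hopen1 hx₀1
  obtain ⟨K₁, hK₁c, hx₀K₁, hK₁sub⟩ := exists_compact_subset isOpen_interior hx₀K₀
  have hK₀Δ : K₀ ⊆ Δ := hK₀sub.trans diff_subset
  obtain ⟨a, ha1, ha0, hacs, haI⟩ := exists_continuous_one_zero_of_isCompact hK₁c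
    isOpen_interior.isClosed_compl (disjoint_compl_right_iff_subset.mpr hK₁sub)
  have ha_nonneg : ∀ x, 0 ≤ a x := fun x => (haI x).1
  have ha_le_one : ∀ x, a x ≤ 1 := fun x => (haI x).2
  have ha_out : ∀ x, x ∉ interior K₀ → a x = 0 := fun x hx => ha0 hx
  have ha_notΔ : ∀ x ∉ Δ, a x = 0 := fun x hx =>
    ha_out x (fun h => hx (hK₀Δ (interior_subset h)))
  -- summability of weighted sums
  have hsummul : ∀ (y : X) (g : X → ℝ), (∀ x, 0 ≤ g x) → (∀ x, g x ≤ 1) →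
      Summable (fun x : Fiber Δ φ y => ρ x.1 * g x.1) := by
    intro y g h0 h1
    refine Summable.of_nonneg_of_le (fun x => mul_nonneg (hnn _ x.2.1) (h0 _))
      (fun x => ?_) (hsum y)
    calc ρ x.1 * g x.1 ≤ ρ x.1 * 1 := mul_le_mul_of_nonneg_left (h1 _) (hnn _ x.2.1)
    _ = ρ x.1 := mul_one _
  -- continuity of transfer sums of compactly supported functions
  have key : ∀ g : C(X, ℝ), HasCompactSupport g → (∀ x ∉ Δ, g x = 0) →
      Continuous (fun y => ∑' x : Fiber Δ φ y, ρ x.1 * g x.1) := by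
    intro g hg hgΔ
    set G : C₀(X, ℂ) := ⟨⟨fun x => (g x : ℂ), Complex.continuous_ofReal.comp g.continuous⟩, by
      simpa [Function.comp_def] using (Complex.continuous_ofReal.tendsto 0).comp hg.is_zero_at_infty⟩ with hG
    obtain ⟨B, hB⟩ := hL G (fun x hx => by simp [hG, hgΔ x hx])
    have hBy : ∀ y, B y = ((∑' x : Fiber Δ φ y, ρ x.1 * g x.1 : ℝ) : ℂ) := by
      intro y
      rw [hB y, Complex.ofReal_tsum]
      apply tsum_congr
      intro x
      push_cast
      rfl
    have heq : (fun y => ∑' x : Fiber Δ φ y, ρ x.1 * g x.1) = fun y => (B y).re := by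
      funext y; rw [hBy y, Complex.ofReal_re]
    rw [heq]
    exact Complex.continuous_re.comp (map_continuous B)
  set La : X → ℝ := fun y => ∑' x : Fiber Δ φ y, ρ x.1 * a x.1 with hLa
  have hLacont : Continuous La := key a hacs ha_notΔ
  -- bound at y₀
  have hLay₀ : La y₀ ≤ ρ x₀ + ε / 3 := by
    have hsa := hsummul y₀ a ha_nonneg ha_le_one
    show (∑' x : ↥(Fiber Δ φ y₀), ρ x.1 * a x.1) ≤ ρ x₀ + ε / 3
    rw [tsum_split_set' (ρ := fun z => ρ z * a z) (↑F : Set X) hsa]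
    have h1 : (∑' x : ↥(Fiber Δ φ y₀ ∩ ↑F), ρ x.1 * a x.1) = ρ x₀ * a x₀ := by
      refine tsum_eq_single (⟨x₀, hx₀T, hx₀F⟩ : ↥(Fiber Δ φ y₀ ∩ ↑F)) (fun x hx => ?_)
      have hne : x.1 ≠ x₀ := fun h => hx (Subtype.ext h)
      have hmem : x.1 ∈ F.erase x₀ := Finset.mem_erase.2 ⟨hne, x.2.2⟩
      have : x.1 ∉ interior K₀ := fun h => (hK₀sub (interior_subset h)).2 hmem
      rw [ha_out _ this, mul_zero]
    have h2 : (∑' x : ↥(Fiber Δ φ y₀ \ ↑F), ρ x.1 * a x.1)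
        ≤ ∑' x : ↥(Fiber Δ φ y₀ \ ↑F), ρ x.1 := by
      have sA : Summable (fun x : ↥(Fiber Δ φ y₀ \ (↑F : Set X)) => ρ x.1 * a x.1) :=
        summable_of_subset' (ρ := fun z => ρ z * a z) hsa diff_subset
      have sB : Summable (fun x : ↥(Fiber Δ φ y₀ \ (↑F : Set X)) => ρ x.1) :=
        summable_of_subset' (hsum y₀) diff_subset
      refine Summable.tsum_le_tsum (fun x => ?_) sA sB
      calc ρ x.1 * a x.1 ≤ ρ x.1 * 1 := mul_le_mul_of_nonneg_left (ha_le_one _) (hnn _ x.2.1.1)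
      _ = ρ x.1 := mul_one _
    have ha₀1 : a x₀ = 1 := ha1 (interior_subset hx₀K₁)
    rw [h1, ha₀1, mul_one]
    have := h2.trans htail.le
    linarith
  refine ⟨interior K₁, isOpen_interior, hx₀K₁,
    (interior_subset.trans hK₁sub).trans (interior_subset.trans hK₀Δ), ?_⟩
  intro U hUopen hx₀U hUsub
  have hUK₁ : U ⊆ K₁ := hUsub.trans interior_subset
  -- construct b for the lower bound
  obtain ⟨K₂, hK₂c, hx₀K₂, hK₂sub⟩ := exists_compact_subset hUopen hx₀U
  obtain ⟨b, hb1, hb0, hbcs, hbI⟩ := exists_continuous_one_zero_of_isCompact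
    isCompact_singleton isOpen_interior.isClosed_compl
    (disjoint_compl_right_iff_subset.mpr (singleton_subset_iff.2 hx₀K₂))
  have hb_nonneg : ∀ x, 0 ≤ b x := fun x => (hbI x).1
  have hb_le_one : ∀ x, b x ≤ 1 := fun x => (hbI x).2
  have hb_out : ∀ x, x ∉ U → b x = 0 := fun x hx =>
    hb0 (fun h => hx (hK₂sub (interior_subset h)))
  have hUΔ : U ⊆ Δ := fun x hx =>
    (interior_subset.trans hK₁sub).trans (interior_subset.trans hK₀Δ) (hUsub hx)
  have hb_notΔ : ∀ x ∉ Δ, b x = 0 := fun x hx => hb_out x (fun h => hx (hUΔ h))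
  set Lb : X → ℝ := fun y => ∑' x : Fiber Δ φ y, ρ x.1 * b x.1 with hLb
  have hLbcont : Continuous Lb := key b hbcs hb_notΔ
  have hLby₀ : ρ x₀ ≤ Lb y₀ := by
    have hb₀1 : b x₀ = 1 := hb1 rfl
    have hle := Summable.le_tsum (hsummul y₀ b hb_nonneg hb_le_one) ⟨x₀, hx₀T⟩
      (fun j _ => mul_nonneg (hnn _ j.2.1) (hb_nonneg _))
    show ρ x₀ ≤ ∑' x : ↥(Fiber Δ φ y₀), ρ x.1 * b x.1
    calc ρ x₀ = ρ x₀ * b x₀ := by rw [hb₀1, mul_one]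
    _ ≤ _ := hle
  refine ⟨La ⁻¹' Iio (La y₀ + ε / 3) ∩ Lb ⁻¹' Ioi (Lb y₀ - ε / 3),
    (hLacont.isOpen_preimage _ isOpen_Iio).inter (hLbcont.isOpen_preimage _ isOpen_Ioi),
    ⟨by simp [hε3.le]; linarith, by simp; linarith⟩, ?_⟩
  intro y hy
  set S : Set X := Fiber Δ φ y with hS
  -- upper bound
  have hupper : (∑' x : ↥(S ∩ U), ρ x.1) ≤ La y := by
    have e1 : (∑' x : ↥(S ∩ U), ρ x.1) = ∑' x : ↥(S ∩ U), ρ x.1 * a x.1 := by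
      refine tsum_congr (fun x => ?_)
      rw [ha1 (hUK₁ x.2.2), Pi.one_apply, mul_one]
    rw [e1]
    show _ ≤ ∑' x : ↥(Fiber Δ φ y), ρ x.1 * a x.1
    have sA : Summable (fun x : ↥(S ∩ U) => ρ x.1 * a x.1) :=
      summable_of_subset' (ρ := fun z => ρ z * a z) (hsummul y a ha_nonneg ha_le_one)
        inter_subset_left
    exact Summable.tsum_le_tsum_of_inj (Set.inclusion inter_subset_left)
      (Set.inclusion_injective inter_subset_left)
      (fun c _ => mul_nonneg (hnn _ c.2.1) (ha_nonneg _)) (fun _ => le_rfl)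
      sA (hsummul y a ha_nonneg ha_le_one)
  -- lower bound
  have hlower : Lb y ≤ ∑' x : ↥(S ∩ U), ρ x.1 := by
    have e3 : Lb y = ∑' x : ↥(S ∩ U), ρ x.1 * b x.1 := by
      show Lb y = _
      rw [show Lb y = ∑' x : ↥(Fiber Δ φ y), ρ x.1 * b x.1 from rfl,
        tsum_split_set' (ρ := fun z => ρ z * b z) U (hsummul y b hb_nonneg hb_le_one)]
      have : ∀ x : ↥(S \ U), ρ x.1 * b x.1 = 0 := fun x => by
        rw [hb_out _ x.2.2, mul_zero]
      rw [tsum_congr this, tsum_zero, add_zero]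
    rw [e3]
    have sA : Summable (fun x : ↥(S ∩ U) => ρ x.1 * b x.1) :=
      summable_of_subset' (ρ := fun z => ρ z * b z) (hsummul y b hb_nonneg hb_le_one)
        inter_subset_left
    have sB : Summable (fun x : ↥(S ∩ U) => ρ x.1) :=
      summable_of_subset' (hsum y) inter_subset_left
    refine Summable.tsum_le_tsum (fun x => ?_) sA sB
    calc ρ x.1 * b x.1 ≤ ρ x.1 * 1 := mul_le_mul_of_nonneg_left (hb_le_one _) (hnn _ x.2.1.1)
    _ = ρ x.1 := mul_one _
  have hy1 : La y < La y₀ + ε / 3 := hy.1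
  have hy2 : Lb y₀ - ε / 3 < Lb y := hy.2
  rw [abs_lt]
  constructor <;> push_cast <;> linarith
end
end

section
/- For every x₀ ∈ Δ, every open set U ⊆ Δ with x₀ ∈ U, and every ε > 0, there exists a continuous function h : X → [0,1] whose support is a compact subset of U, such that h ≡ 1 on an open neighbourhood of x₀ and ρ(x₀) ≤ sup_{y∈X} Σ_{x∈φ⁻¹(y)} ρ(x)h(x) < ρ(x₀) + ε. -/
open scoped ZeroAtInfty

noncomputable section

variable {X : Type*} [TopologicalSpace X]

set_option maxHeartbeats 1000000 in
/-- For every `x₀ ∈ Δ`, every open `U ⊆ Δ` containing `x₀`, and every `ε > 0`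
there is a continuous `[0,1]`-valued function `h` compactly supported in `U`, equal to `1` on a
neighbourhood of `x₀`, with `ρ(x₀) ≤ sup_y Σ_{x ∈ φ⁻¹(y)} ρ(x) h(x) < ρ(x₀) + ε`. -/
theorem approximation_of_rho
    {X : Type*} [TopologicalSpace X] [LocallyCompactSpace X] [T2Space X]
    (Δ : Set X) (φ : X → X) (ρ : X → ℝ) (M : ℝ)
    (hΔ : IsOpen Δ) (hφ : ContinuousOn φ Δ)
    (hcount : ∀ y : X, (Fiber Δ φ y).Countable)
    (hpot : IsPotential Δ φ ρ M)
    (x₀ : X) (U : Set X) (hU : IsOpen U) (hx₀U : x₀ ∈ U) (hUΔ : U ⊆ Δ)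
    (ε : ℝ) (hε : 0 < ε) :
    ∃ h : C(X, ℝ), (∀ x, h x ∈ Set.Icc (0 : ℝ) 1) ∧ HasCompactSupport h ∧
      tsupport h ⊆ U ∧ (∃ W : Set X, IsOpen W ∧ x₀ ∈ W ∧ ∀ x ∈ W, h x = 1) ∧
      ρ x₀ ≤ (⨆ y : X, ∑' x : Fiber Δ φ y, ρ x.1 * h x.1) ∧
      (⨆ y : X, ∑' x : Fiber Δ φ y, ρ x.1 * h x.1) < ρ x₀ + ε := by
  obtain ⟨hρ0, hsum, hbdd, hL⟩ := hpot
  have hx₀Δ : x₀ ∈ Δ := hUΔ hx₀U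
  set y₀ := φ x₀ with hy₀
  have hx₀F : x₀ ∈ Fiber Δ φ y₀ := ⟨hx₀Δ, rfl⟩
  set x₀' : Fiber Δ φ y₀ := ⟨x₀, hx₀F⟩ with hx₀'
  have hρ0' : ∀ y (x : Fiber Δ φ y), 0 ≤ ρ x.1 := fun y x => hρ0 _ x.2.1
  -- summability of truncated sums
  have key : ∀ (g : X → ℝ), (∀ x, g x ∈ Set.Icc (0:ℝ) 1) → ∀ y,
      Summable (fun x : Fiber Δ φ y => ρ x.1 * g x.1) := by
    intro g hg y
    refine Summable.of_nonneg_of_le (fun x => mul_nonneg (hρ0' y x) (hg _).1)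
      (fun x => mul_le_of_le_one_right (hρ0' y x) (hg _).2) (hsum y)
  -- small tail finset
  obtain ⟨s, hs⟩ : ∃ s : Finset (Fiber Δ φ y₀),
      (∑' x : ↑((s : Set (Fiber Δ φ y₀))ᶜ), ρ x.1.1) < ε / 4 :=
    ((tendsto_order.1 (tendsto_tsum_compl_atTop_zero
      (fun x : Fiber Δ φ y₀ => ρ x.1))).2 _ (by linarith)).exists
  -- bad points and their complement
  classical
  set bad : Finset X := (s.image Subtype.val).erase x₀ with hbad
  have hNopen : IsOpen ((↑bad : Set X)ᶜ) := bad.finite_toSet.isClosed.isOpen_compl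
  have hx₀N : x₀ ∈ ((↑bad : Set X)ᶜ) := by simp [hbad]
  -- compact neighbourhood and cutoff a
  obtain ⟨K₀, hK₀c, hx₀K₀, hK₀U⟩ :=
    exists_compact_subset (hU.inter hNopen) ⟨hx₀U, hx₀N⟩
  obtain ⟨L₀, hL₀c, hK₀L₀, hL₀U⟩ := exists_compact_between hK₀c (hU.inter hNopen) hK₀U
  obtain ⟨a, haK, ha0, hacs, haIcc⟩ := exists_continuous_one_zero_of_isCompact hK₀c
    isOpen_interior.isClosed_compl
    (Set.disjoint_compl_right_iff_subset.mpr hK₀L₀)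
  have htsa : tsupport a ⊆ L₀ := by
    refine closure_minimal ?_ hL₀c.isClosed
    intro x hx
    by_contra hxL
    exact hx (ha0 (by simpa using fun hxi => hxL (interior_subset hxi)))
  have htsaU : tsupport a ⊆ U ∩ (↑bad : Set X)ᶜ := htsa.trans hL₀U
  -- complexified a, transfer
  have hacc : HasCompactSupport (fun x => ((a x : ℝ) : ℂ)) :=
    hacs.comp_left (g := fun t : ℝ => (t : ℂ)) (by simp)
  set ac : C₀(X, ℂ) := ⟨⟨fun x => ((a x : ℝ) : ℂ),
    Complex.continuous_ofReal.comp a.continuous⟩, hacc.is_zero_at_infty⟩ with hac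
  obtain ⟨b, hb⟩ := hL ac (by
    intro x hx
    have : a x = 0 := image_eq_zero_of_notMem_tsupport
      (fun hxt => hx (hUΔ (htsaU hxt).1))
    simp [hac, this])
  set B : X → ℝ := fun y => ∑' x : Fiber Δ φ y, ρ x.1 * a x.1 with hB
  have hbB : ∀ y, b y = ((B y : ℝ) : ℂ) := by
    intro y
    rw [hb y, hB]
    rw [Complex.ofReal_tsum]
    refine tsum_congr fun x => ?_
    show (ρ x.1 : ℂ) * ((a x.1 : ℝ) : ℂ) = _
    push_cast
    ring
  have hBcont : Continuous B := by
    have : B = fun y => (b y).re := by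
      funext y; rw [hbB]; simp
    rw [this]
    exact Complex.continuous_re.comp (map_continuous b)
  -- bound B y₀
  have hsummA : Summable (fun x : Fiber Δ φ y₀ => ρ x.1 * a x.1) := key a haIcc y₀
  have hfin : (∑ x ∈ s, ρ x.1 * a x.1) ≤ ρ x₀ := by
    have h1 : ∀ x ∈ s, ρ x.1 * a x.1 ≤ if x = x₀' then ρ x₀ else 0 := by
      intro x hx
      by_cases hxx : x = x₀'
      · simp only [hxx, if_pos rfl]
        exact mul_le_of_le_one_right (hρ0 _ hx₀Δ) (haIcc _).2
      · simp only [if_neg hxx]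
        have hxbad : (x : X) ∈ (↑bad : Set X) := by
          simp only [hbad, Finset.coe_erase, Set.mem_diff, Finset.coe_image,
            Set.mem_image, Set.mem_singleton_iff]
          exact ⟨⟨x, hx, rfl⟩, fun hxe => hxx (Subtype.ext hxe)⟩
        have : a x.1 = 0 := image_eq_zero_of_notMem_tsupport
          (fun hxt => (htsaU hxt).2 hxbad)
        simp [this]
    calc (∑ x ∈ s, ρ x.1 * a x.1) ≤ ∑ x ∈ s, if x = x₀' then ρ x₀ else 0 :=
          Finset.sum_le_sum h1
      _ = if x₀' ∈ s then ρ x₀ else 0 := by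
          rw [Finset.sum_ite_eq' s x₀' (fun _ => ρ x₀)]
      _ ≤ ρ x₀ := by split_ifs <;> simp [hρ0 _ hx₀Δ]
  have htail : (∑' x : ↑((s : Set (Fiber Δ φ y₀))ᶜ), ρ x.1.1 * a x.1.1) ≤
      ∑' x : ↑((s : Set (Fiber Δ φ y₀))ᶜ), ρ x.1.1 := by
    refine Summable.tsum_le_tsum (fun x => mul_le_of_le_one_right (hρ0' y₀ x.1) (haIcc _).2)
      (hsummA.subtype _) ((hsum y₀).subtype _)
  have hBy₀ : B y₀ ≤ ρ x₀ + ε / 4 := by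
    simp only [hB]
    have := Summable.sum_add_tsum_compl (s := s) hsummA
    rw [← this]
    have := hs
    nlinarith [htail]
  -- the open set W'
  set W' : Set X := B ⁻¹' (Set.Iio (ρ x₀ + ε / 2)) with hW'
  have hW'open : IsOpen W' := hBcont.isOpen_preimage _ isOpen_Iio
  have hy₀W' : y₀ ∈ W' := by
    simp only [hW', Set.mem_preimage, Set.mem_Iio]
    linarith
  -- small neighbourhood V of x₀
  set V : Set X := interior K₀ ∩ (Δ ∩ φ ⁻¹' W') with hV
  have hVopen : IsOpen V := isOpen_interior.inter (hφ.isOpen_inter_preimage hΔ hW'open)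
  have hx₀V : x₀ ∈ V := ⟨hx₀K₀, hx₀Δ, hy₀W'⟩
  -- build h
  obtain ⟨K₁, hK₁c, hx₀K₁, hK₁V⟩ := exists_compact_subset hVopen hx₀V
  obtain ⟨L₁, hL₁c, hK₁L₁, hL₁V⟩ := exists_compact_between hK₁c hVopen hK₁V
  obtain ⟨h, hhK, hh0, hhcs, hhIcc⟩ := exists_continuous_one_zero_of_isCompact hK₁c
    isOpen_interior.isClosed_compl
    (Set.disjoint_compl_right_iff_subset.mpr hK₁L₁)
  have htsh : tsupport h ⊆ L₁ := by
    refine closure_minimal ?_ hL₁c.isClosed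
    intro x hx
    by_contra hxL
    exact hx (hh0 (by simpa using fun hxi => hxL (interior_subset hxi)))
  have htshV : tsupport h ⊆ V := htsh.trans hL₁V
  refine ⟨h, hhIcc, hhcs, ?_, ⟨interior K₁, isOpen_interior, hx₀K₁,
    fun x hx => hhK (interior_subset hx)⟩, ?_, ?_⟩
  · exact htshV.trans ((Set.inter_subset_left.trans interior_subset).trans
      (hK₀U.trans Set.inter_subset_left))
  · -- lower bound
    have hb1 : ∀ y, (∑' x : Fiber Δ φ y, ρ x.1 * h x.1) ≤ M := fun y =>
      le_trans (Summable.tsum_le_tsum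
        (fun x => mul_le_of_le_one_right (hρ0' y x) (hhIcc _).2)
        (key h hhIcc y) (hsum y)) (hbdd y)
    have hBdd : BddAbove (Set.range fun y => ∑' x : Fiber Δ φ y, ρ x.1 * h x.1) := by
      refine ⟨M, ?_⟩
      rintro _ ⟨y, rfl⟩
      exact hb1 y
    have hx₀h : h x₀ = 1 := hhK (interior_subset hx₀K₁)
    have : ρ x₀ ≤ ∑' x : Fiber Δ φ y₀, ρ x.1 * h x.1 := by
      have := Summable.le_tsum (key h hhIcc y₀) x₀'
        (fun b _ => mul_nonneg (hρ0' y₀ b) (hhIcc _).1)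
      simpa [hx₀', hx₀h] using this
    exact this.trans (le_ciSup hBdd y₀)
  · -- upper bound
    have hub : ∀ y, (∑' x : Fiber Δ φ y, ρ x.1 * h x.1) ≤ ρ x₀ + ε / 2 := by
      intro y
      by_cases hyW : y ∈ W'
      · have hle : (∑' x : Fiber Δ φ y, ρ x.1 * h x.1) ≤ B y := by
          refine Summable.tsum_le_tsum ?_ (key h hhIcc y) (key a haIcc y)
          intro x
          by_cases hhx : h x.1 = 0
          · simp only [hhx, mul_zero]
            exact mul_nonneg (hρ0' y x) (haIcc _).1
          · have hxV : x.1 ∈ V := htshV (subset_closure hhx)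
            have hax : a x.1 = 1 := haK (interior_subset hxV.1)
            rw [hax]
            exact mul_le_mul_of_nonneg_left (hhIcc _).2 (hρ0' y x)
        have hBy : B y < ρ x₀ + ε / 2 := by
          have := hyW
          simp only [hW', Set.mem_preimage, Set.mem_Iio] at this
          exact this
        linarith
      · have hzero : (∑' x : Fiber Δ φ y, ρ x.1 * h x.1) = 0 := by
          have hz : ∀ x : Fiber Δ φ y, ρ x.1 * h x.1 = 0 := by
            intro x
            by_cases hhx : h x.1 = 0
            · simp [hhx]
            · exact absurd (x.2.2 ▸ (htshV (subset_closure hhx)).2.2) hyW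
          rw [tsum_congr hz, tsum_zero]
        rw [hzero]
        have := hρ0 _ hx₀Δ
        linarith
    have hne : Nonempty X := ⟨x₀⟩
    have : (⨆ y : X, ∑' x : Fiber Δ φ y, ρ x.1 * h x.1) ≤ ρ x₀ + ε / 2 :=
      ciSup_le hub
    linarith
end
end

section
/- Let (π, T) be a representation of L on a Hilbert space H. For all a ∈ C₀(X) and b ∈ C₀(Δ), the function b·(a∘φ) defined as x ↦ b(x)a(φ(x)) for x ∈ Δ and 0 for x ∉ Δ belongs to C₀(Δ), and π(b) T π(a) = π(b·(a∘φ)) T. If moreover φ is a proper map (preimages of compact sets are compact) and T(H) is contained in the closure of the linear span of {π(b)h : b ∈ C₀(Δ), h ∈ H}, then for every a ∈ C₀(X) the extension of a∘φ by zero belongs to C₀(Δ) and T π(a) = π(a∘φ) T. -/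
open scoped ZeroAtInfty

noncomputable section

variable {X : Type*} [TopologicalSpace X]

/-- A representation `(π, T)` of the transfer operator `L` determined by `(Δ, φ, ρ)`:
`π` is a nondegenerate *-representation of `C₀(X)` and `T` satisfies
`π(L(a)) = T* π(a) T` for all `a ∈ C₀(Δ)`. -/
def IsRep (Δ : Set X) (φ : X → X) (ρ : X → ℝ) {H : Type*} [NormedAddCommGroup H]
    [InnerProductSpace ℂ H] [CompleteSpace H]
    (π : C₀(X, ℂ) →⋆ₙₐ[ℂ] (H →L[ℂ] H)) (T : H →L[ℂ] H) : Prop :=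
  Dense (↑(Submodule.span ℂ {v : H | ∃ (a : C₀(X, ℂ)) (h : H), π a h = v}) : Set H) ∧
  ∀ a b : C₀(X, ℂ), (∀ x ∉ Δ, a x = 0) →
    (∀ y : X, b y = ∑' x : Fiber Δ φ y, (ρ x.1 : ℂ) * a x.1) →
    π b = star T * π a * T

open Filter Topology

/-- Pure ring computation underlying the C*-algebraic argument. -/
lemma RepAux.star_sub_mul_sub_eq_zero {R : Type*} [Ring R] [StarRing R]
    (A A' B B' C C' T F FA AF AFA : R)
    (hA : star A = A') (hB : star B = B') (hC : star C = C')
    (hF : F = star T * (B' * B) * T) (hFA : FA = star T * (B' * C) * T)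
    (hAF : AF = star T * (C' * B) * T) (hAFA : AFA = star T * (C' * C) * T)
    (h5 : AF = A' * F) (h7 : AFA = A' * FA) :
    star (B * T * A - C * T) * (B * T * A - C * T) = 0 := by
  have k1 : star (B * T * A) * (B * T * A) = A' * F * A := by
    rw [hF]; simp only [star_mul, hA, hB, mul_assoc]
  have k2 : star (B * T * A) * (C * T) = A' * FA := by
    rw [hFA]; simp only [star_mul, hA, hB, mul_assoc]
  have k3 : star (C * T) * (B * T * A) = AF * A := by
    rw [hAF]; simp only [star_mul, hC, mul_assoc]
  have k4 : star (C * T) * (C * T) = AFA := by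
    rw [hAFA]; simp only [star_mul, hC, mul_assoc]
  rw [star_sub, sub_mul, mul_sub, mul_sub, k1, k2, k3, k4, ← h5, ← h7]
  abel

lemma RepAux.C0_norm_apply_le (a : C₀(X, ℂ)) (x : X) : ‖a x‖ ≤ ‖a‖ := by
  have h := a.toBCF.norm_coe_le_norm x
  rwa [ZeroAtInftyContinuousMap.norm_toBCF_eq_norm] at h

/-- Extension by zero of `b · (a ∘ φ)` belongs to `C₀`. -/
lemma RepAux.exists_ext1 (Δ : Set X) (φ : X → X) (hΔ : IsOpen Δ) (hφ : ContinuousOn φ Δ)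
    (a b : C₀(X, ℂ)) (hb : ∀ x ∉ Δ, b x = 0) :
    ∃ c : C₀(X, ℂ), (∀ x ∈ Δ, c x = b x * a (φ x)) ∧ (∀ x ∉ Δ, c x = 0) := by
  set f : X → ℂ := Δ.indicator (fun x => b x * a (φ x)) with hf
  have hmem : ∀ x ∈ Δ, f x = b x * a (φ x) := fun x hx => Set.indicator_of_mem hx _
  have hnmem : ∀ x ∉ Δ, f x = 0 := fun x hx => Set.indicator_of_notMem hx _
  have hbound : ∀ x, ‖f x‖ ≤ ‖a‖ * ‖b x‖ := by
    intro x
    by_cases hx : x ∈ Δ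
    · rw [hmem x hx, norm_mul, mul_comm (‖b x‖)]
      exact mul_le_mul_of_nonneg_right (RepAux.C0_norm_apply_le a (φ x)) (norm_nonneg _)
    · rw [hnmem x hx, norm_zero]
      positivity
  have hcont : Continuous f := by
    rw [continuous_iff_continuousAt]
    intro x₀
    by_cases hx : x₀ ∈ Δ
    · have h1 : ContinuousAt (fun x => b x * a (φ x)) x₀ :=
        (b.continuous.continuousAt).mul
          ((a.continuous.continuousAt).comp (hφ.continuousAt (hΔ.mem_nhds hx)))
      refine h1.congr ?_
      filter_upwards [hΔ.mem_nhds hx] with x hxΔ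
      exact (hmem x hxΔ).symm
    · rw [ContinuousAt, hnmem x₀ hx]
      have h2 : Tendsto (fun x => ‖a‖ * ‖b x‖) (𝓝 x₀) (𝓝 (‖a‖ * ‖b x₀‖)) :=
        ((b.continuous.continuousAt).norm).const_mul _
      rw [hb x₀ hx, norm_zero, mul_zero] at h2
      exact squeeze_zero_norm hbound h2
  have hzero : Tendsto f (cocompact X) (𝓝 0) := by
    have h2 : Tendsto (fun x => ‖a‖ * ‖b x‖) (cocompact X) (𝓝 (‖a‖ * ‖(0:ℂ)‖)) :=
      (b.zero_at_infty'.norm).const_mul _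
    rw [norm_zero, mul_zero] at h2
    exact squeeze_zero_norm hbound h2
  exact ⟨⟨⟨f, hcont⟩, hzero⟩, hmem, hnmem⟩

/-- For `a ∈ C₀` and `ε > 0`, the set `{y | ε ≤ ‖a y‖}` is compact. -/
lemma RepAux.C0_compact_level [T2Space X] (a : C₀(X, ℂ)) {ε : ℝ} (hε : 0 < ε) :
    IsCompact {y : X | ε ≤ ‖a y‖} := by
  have h1 : {z : ℂ | ‖z‖ < ε} ∈ 𝓝 (0 : ℂ) := by
    have := Metric.ball_mem_nhds (0 : ℂ) hε
    simpa [Metric.ball, dist_eq_norm] using this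
  have h2 := a.zero_at_infty' h1
  rw [Filter.mem_map, mem_cocompact] at h2
  obtain ⟨K, hK, hKsub⟩ := h2
  refine hK.of_isClosed_subset (isClosed_le continuous_const a.continuous.norm) ?_
  intro y hy
  by_contra hyK
  have hyc : y ∈ Kᶜ := hyK
  have := hKsub hyc
  simp only [Set.mem_preimage, Set.mem_setOf_eq] at this hy
  have h3 : ‖a y‖ < ε := this
  linarith

/-- If `φ` is proper, the extension by zero of `a ∘ φ` belongs to `C₀`. -/
lemma RepAux.exists_ext2 [T2Space X] (Δ : Set X) (φ : X → X) (hΔ : IsOpen Δ)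
    (hφ : ContinuousOn φ Δ)
    (hproper : ∀ K : Set X, IsCompact K → IsCompact {x | x ∈ Δ ∧ φ x ∈ K})
    (a : C₀(X, ℂ)) :
    ∃ c : C₀(X, ℂ), (∀ x ∈ Δ, c x = a (φ x)) ∧ (∀ x ∉ Δ, c x = 0) := by
  set f : X → ℂ := Δ.indicator (fun x => a (φ x)) with hf
  have hmem : ∀ x ∈ Δ, f x = a (φ x) := fun x hx => Set.indicator_of_mem hx _
  have hnmem : ∀ x ∉ Δ, f x = 0 := fun x hx => Set.indicator_of_notMem hx _
  have key : ∀ ε : ℝ, 0 < ε → ∃ K' : Set X, IsCompact K' ∧ K' ⊆ Δ ∧ ∀ x ∉ K', ‖f x‖ < ε := by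
    intro ε hε
    refine ⟨{x | x ∈ Δ ∧ φ x ∈ {y : X | ε ≤ ‖a y‖}}, hproper _ (RepAux.C0_compact_level a hε),
      fun x hx => hx.1, ?_⟩
    intro x hx
    by_cases hxΔ : x ∈ Δ
    · rw [hmem x hxΔ]
      by_contra hcon
      push_neg at hcon
      exact hx ⟨hxΔ, hcon⟩
    · rw [hnmem x hxΔ, norm_zero]; exact hε
  have hcont : Continuous f := by
    rw [continuous_iff_continuousAt]
    intro x₀
    by_cases hx : x₀ ∈ Δ
    · have h1 : ContinuousAt (fun x => a (φ x)) x₀ :=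
        (a.continuous.continuousAt).comp (hφ.continuousAt (hΔ.mem_nhds hx))
      refine h1.congr ?_
      filter_upwards [hΔ.mem_nhds hx] with x hxΔ
      exact (hmem x hxΔ).symm
    · rw [ContinuousAt, hnmem x₀ hx]
      rw [Metric.tendsto_nhds]
      intro ε hε
      obtain ⟨K', hK', hKΔ, hsmall⟩ := key ε hε
      have hopen : IsOpen K'ᶜ := hK'.isClosed.isOpen_compl
      have hx0 : x₀ ∈ K'ᶜ := fun hcon => hx (hKΔ hcon)
      filter_upwards [hopen.mem_nhds hx0] with x hxK
      rw [dist_zero_right]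
      exact hsmall x hxK
  have hzero : Tendsto f (cocompact X) (𝓝 0) := by
    rw [Metric.tendsto_nhds]
    intro ε hε
    obtain ⟨K', hK', _, hsmall⟩ := key ε hε
    rw [eventually_iff, mem_cocompact]
    refine ⟨K', hK', fun x hx => ?_⟩
    rw [Set.mem_setOf_eq, dist_zero_right]
    exact hsmall x hx
  exact ⟨⟨⟨f, hcont⟩, hzero⟩, hmem, hnmem⟩

/-- Commutation relations: `π(b) T π(a) = π(b·(a∘φ)) T` for all `a ∈ C₀(X)`,
`b ∈ C₀(Δ)`; and if `φ` is proper and `T(H) ⊆ closure(span π(C₀(Δ))H)`, then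
`T π(a) = π(a∘φ) T` for all `a ∈ C₀(X)`. -/
theorem representation_commutation
    {X : Type*} [TopologicalSpace X] [LocallyCompactSpace X] [T2Space X]
    (Δ : Set X) (φ : X → X) (ρ : X → ℝ) (M : ℝ)
    (hΔ : IsOpen Δ) (hφ : ContinuousOn φ Δ)
    (hcount : ∀ y : X, (Fiber Δ φ y).Countable)
    (hpot : IsPotential Δ φ ρ M)
    {H : Type*} [NormedAddCommGroup H] [InnerProductSpace ℂ H] [CompleteSpace H]
    (π : C₀(X, ℂ) →⋆ₙₐ[ℂ] (H →L[ℂ] H)) (T : H →L[ℂ] H)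
    (hrep : IsRep Δ φ ρ π T) :
    (∀ a b : C₀(X, ℂ), (∀ x ∉ Δ, b x = 0) →
      ∃ c : C₀(X, ℂ), (∀ x ∈ Δ, c x = b x * a (φ x)) ∧ (∀ x ∉ Δ, c x = 0) ∧
        π b * T * π a = π c * T) ∧
    ((∀ K : Set X, IsCompact K → IsCompact {x | x ∈ Δ ∧ φ x ∈ K}) →
      (∀ v : H, T v ∈ closure (↑(Submodule.span ℂ
          {w : H | ∃ (b : C₀(X, ℂ)) (h : H), (∀ x ∉ Δ, b x = 0) ∧ π b h = w}) : Set H)) →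
      ∀ a : C₀(X, ℂ), ∃ c : C₀(X, ℂ), (∀ x ∈ Δ, c x = a (φ x)) ∧ (∀ x ∉ Δ, c x = 0) ∧
        T * π a = π c * T) := by
  have main1 : ∀ a b : C₀(X, ℂ), (∀ x ∉ Δ, b x = 0) →
      ∃ c : C₀(X, ℂ), (∀ x ∈ Δ, c x = b x * a (φ x)) ∧ (∀ x ∉ Δ, c x = 0) ∧
        π b * T * π a = π c * T := by
    intro a b hb
    obtain ⟨c, hcΔ, hc0⟩ := RepAux.exists_ext1 Δ φ hΔ hφ a b hb
    refine ⟨c, hcΔ, hc0, ?_⟩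
    have hbb : ∀ x ∉ Δ, (star b * b) x = 0 := fun x hx => by simp [hb x hx]
    have hbc : ∀ x ∉ Δ, (star b * c) x = 0 := fun x hx => by simp [hc0 x hx]
    have hcb : ∀ x ∉ Δ, (star c * b) x = 0 := fun x hx => by simp [hc0 x hx]
    have hcc : ∀ x ∉ Δ, (star c * c) x = 0 := fun x hx => by simp [hc0 x hx]
    obtain ⟨f, hf⟩ := hpot.2.2.2 (star b * b) hbb
    have claim1 : ∀ y : X, (f * a) y = ∑' x : Fiber Δ φ y, (ρ x.1 : ℂ) * (star b * c) x.1 := by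
      intro y
      have step : ∀ x : Fiber Δ φ y,
          (ρ x.1 : ℂ) * (star b * c) x.1 = ((ρ x.1 : ℂ) * (star b * b) x.1) * a y := by
        rintro ⟨x, hxΔ, hxy⟩
        simp only [ZeroAtInftyContinuousMap.coe_mul, ZeroAtInftyContinuousMap.coe_star,
          Pi.mul_apply, Pi.star_apply]
        rw [hcΔ x hxΔ, hxy]
        ring
      rw [tsum_congr step, tsum_mul_right, ← hf y]
      simp [mul_comm]
    have claim2 : ∀ y : X,
        (star a * f) y = ∑' x : Fiber Δ φ y, (ρ x.1 : ℂ) * (star c * b) x.1 := by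
      intro y
      have step : ∀ x : Fiber Δ φ y,
          (ρ x.1 : ℂ) * (star c * b) x.1 = ((ρ x.1 : ℂ) * (star b * b) x.1) * star (a y) := by
        rintro ⟨x, hxΔ, hxy⟩
        simp only [ZeroAtInftyContinuousMap.coe_mul, ZeroAtInftyContinuousMap.coe_star,
          Pi.mul_apply, Pi.star_apply]
        rw [hcΔ x hxΔ, hxy, star_mul']
        ring
      rw [tsum_congr step, tsum_mul_right, ← hf y]
      simp [mul_comm]
    have claim3 : ∀ y : X,
        (star a * (f * a)) y = ∑' x : Fiber Δ φ y, (ρ x.1 : ℂ) * (star c * c) x.1 := by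
      intro y
      have step : ∀ x : Fiber Δ φ y,
          (ρ x.1 : ℂ) * (star c * c) x.1
            = ((ρ x.1 : ℂ) * (star b * b) x.1) * (star (a y) * a y) := by
        rintro ⟨x, hxΔ, hxy⟩
        simp only [ZeroAtInftyContinuousMap.coe_mul, ZeroAtInftyContinuousMap.coe_star,
          Pi.mul_apply, Pi.star_apply]
        rw [hcΔ x hxΔ, hxy, star_mul']
        ring
      rw [tsum_congr step, tsum_mul_right, ← hf y]
      simp only [ZeroAtInftyContinuousMap.coe_mul, ZeroAtInftyContinuousMap.coe_star,
        Pi.mul_apply, Pi.star_apply]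
      ring
    have h1 := hrep.2 (star b * b) f hbb hf
    have h2 := hrep.2 (star b * c) (f * a) hbc claim1
    have h3 := hrep.2 (star c * b) (star a * f) hcb claim2
    have h4 := hrep.2 (star c * c) (star a * (f * a)) hcc claim3
    have key := RepAux.star_sub_mul_sub_eq_zero (π a) (π (star a)) (π b) (π (star b))
      (π c) (π (star c)) T (π f) (π (f * a)) (π (star a * f)) (π (star a * (f * a)))
      (map_star π a).symm (map_star π b).symm (map_star π c).symm
      (by rw [h1, map_mul]) (by rw [h2, map_mul]) (by rw [h3, map_mul]) (by rw [h4, map_mul])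
      (by rw [map_mul]) (by rw [map_mul])
    exact sub_eq_zero.mp ((CStarRing.star_mul_self_eq_zero_iff _).mp key)
  refine ⟨main1, ?_⟩
  intro hproper hT a
  obtain ⟨c, hcΔ, hc0⟩ := RepAux.exists_ext2 Δ φ hΔ hφ hproper a
  refine ⟨c, hcΔ, hc0, ?_⟩
  set W : Submodule ℂ H := Submodule.span ℂ
    {w : H | ∃ (b : C₀(X, ℂ)) (h : H), (∀ x ∉ Δ, b x = 0) ∧ π b h = w} with hW
  have stepi : ∀ b : C₀(X, ℂ), (∀ x ∉ Δ, b x = 0) →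
      π b * (T * π a) = π b * (π c * T) := by
    intro b hb
    obtain ⟨c', hc'Δ, hc'0, hc'eq⟩ := main1 a b hb
    have hcc : c' = b * c := by
      ext x
      by_cases hx : x ∈ Δ
      · rw [hc'Δ x hx]; simp [hcΔ x hx]
      · rw [hc'0 x hx]; simp [hb x hx]
    rw [← mul_assoc, hc'eq, hcc, map_mul, mul_assoc]
  have Slem : ∀ b : C₀(X, ℂ), (∀ x ∉ Δ, b x = 0) →
      π b * (T * π a - π c * T) = 0 := by
    intro b hb
    rw [mul_sub, stepi b hb, sub_self]
  have Szero : ∀ v : H, (T * π a - π c * T) v = 0 := by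
    intro v
    set S : H →L[ℂ] H := T * π a - π c * T with hS
    have hWmap : ∀ w ∈ W, π c w ∈ W := by
      intro w hw
      refine Submodule.span_induction ?_ ?_ ?_ ?_ hw
      · rintro w ⟨b, h, hbv, rfl⟩
        apply Submodule.subset_span
        exact ⟨c * b, h, fun x hx => by simp [hc0 x hx], by rw [map_mul]; rfl⟩
      · simp
      · intro w₁ w₂ _ _ h₁ h₂
        simpa [map_add] using W.add_mem h₁ h₂
      · intro r w _ h
        simpa [map_smul] using W.smul_mem r h
    have h1 : S v ∈ closure (W : Set H) := by
      have ha : T (π a v) ∈ closure (W : Set H) := hT (π a v)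
      have hbmem : π c (T v) ∈ closure (W : Set H) :=
        map_mem_closure (π c).continuous (hT v) hWmap
      rw [← Submodule.topologicalClosure_coe] at ha hbmem ⊢
      have : S v = T (π a v) - π c (T v) := rfl
      rw [this]
      exact W.topologicalClosure.sub_mem ha hbmem
    have h2 : ∀ w ∈ closure (W : Set H), (inner ℂ w (S v) : ℂ) = 0 := by
      have hgen : ∀ w ∈ W, (inner ℂ w (S v) : ℂ) = 0 := by
        intro w hw
        refine Submodule.span_induction ?_ ?_ ?_ ?_ hw
        · rintro w ⟨b, h, hbv, rfl⟩
          have hsb : ∀ x ∉ Δ, (star b) x = 0 := fun x hx => by simp [hbv x hx]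
          have hz : π (star b) (S v) = 0 := by
            have := Slem (star b) hsb
            calc π (star b) (S v) = (π (star b) * S) v := rfl
              _ = 0 := by rw [this]; rfl
          have hadj : (inner ℂ (π b h) (S v) : ℂ)
              = inner ℂ h ((ContinuousLinearMap.adjoint (π b)) (S v)) :=
            (ContinuousLinearMap.adjoint_inner_right (π b) h (S v)).symm
          have hadj2 : ContinuousLinearMap.adjoint (π b) = π (star b) := by
            rw [← ContinuousLinearMap.star_eq_adjoint, ← map_star π b]
          rw [hadj, hadj2, hz, inner_zero_right]
        · simp
        · intro w₁ w₂ _ _ h₁ h₂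
          rw [inner_add_left, h₁, h₂, add_zero]
        · intro r w _ h
          rw [inner_smul_left, h, mul_zero]
      intro w hw
      have hclosed : IsClosed {w : H | (inner ℂ w (S v) : ℂ) = 0} :=
        isClosed_eq (Continuous.inner continuous_id continuous_const) continuous_const
      exact closure_minimal hgen hclosed hw
    exact inner_self_eq_zero.mp (h2 _ h1)
  have : T * π a - π c * T = 0 := ContinuousLinearMap.ext fun v => by
    simpa using Szero v
  exact sub_eq_zero.mp this
end
end

section
/- Let (π, T) be a representation of L on a Hilbert space H. Then the closed linear span of {π(a) T T* π(b) : a, b ∈ C₀(Δ)} in B(H) is closed under multiplication and adjoints, hence is a C*-subalgebra of B(H); consequently π(C₀(X)) ∩ (this closed span) is a (two-sided, closed) ideal in π(C₀(X)). -/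
open scoped ZeroAtInfty

noncomputable section

variable {X : Type*} [TopologicalSpace X]

namespace TransferAux

open Filter Topology

lemma norm_apply_le (g : C₀(X, ℂ)) (x : X) : ‖g x‖ ≤ ‖g‖ := by
  rw [← ZeroAtInftyContinuousMap.norm_toBCF_eq_norm]
  exact g.toBCF.norm_coe_le_norm x

/-- Given `a ∈ C₀(Δ)` and `g ∈ C₀(X)`, the pointwise product `x ↦ a x * g (φ x)` again
belongs to `C₀(Δ)`. -/
lemma exists_mulComp {Δ : Set X} {φ : X → X} (hΔ : IsOpen Δ) (hφ : ContinuousOn φ Δ)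
    (a g : C₀(X, ℂ)) (ha : ∀ x ∉ Δ, a x = 0) :
    ∃ c : C₀(X, ℂ), (∀ x, c x = a x * g (φ x)) ∧ ∀ x ∉ Δ, c x = 0 := by
  have hbound : ∀ x, ‖a x * g (φ x)‖ ≤ ‖g‖ * ‖a x‖ := fun x => by
    rw [norm_mul, mul_comm (‖a x‖)]
    exact mul_le_mul_of_nonneg_right (norm_apply_le g (φ x)) (norm_nonneg (a x))
  have hcont : Continuous fun x => a x * g (φ x) := by
    rw [continuous_iff_continuousAt]
    intro x₀
    by_cases hx : x₀ ∈ Δ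
    · exact ((map_continuous a).continuousAt).mul
        (((map_continuous g).continuousAt).comp (hφ.continuousAt (hΔ.mem_nhds hx)))
    · have h0 : a x₀ = 0 := ha x₀ hx
      have ht : Tendsto (fun x => a x * g (φ x)) (𝓝 x₀) (𝓝 0) := by
        apply squeeze_zero_norm hbound
        have := ((((map_continuous a)).tendsto x₀).norm).const_mul ‖g‖
        rw [h0, norm_zero, mul_zero] at this
        exact this
      simpa [ContinuousAt, h0] using ht
  have hzero : Tendsto (fun x => a x * g (φ x)) (Filter.cocompact X) (𝓝 0) := by
    apply squeeze_zero_norm hbound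
    have := (zero_at_infty a).norm.const_mul ‖g‖
    rw [norm_zero, mul_zero] at this
    exact this
  exact ⟨⟨⟨fun x => a x * g (φ x), hcont⟩, hzero⟩, fun x => rfl,
    fun x hx => by simp [ha x hx]⟩

/-- The key commutation identity: for `a ∈ C₀(Δ)`, `g ∈ C₀(X)` and
`c = a · (g ∘ φ) ∈ C₀(Δ)`, one has `π(a) T π(g) = π(c) T`.  It is proved by showing that
`D := π(a) T π(g) - π(c) T` satisfies `D* D = 0`, using the transfer-operator relation
`T* π(e) T = π(L(e))` and the module property `L(p · (g'∘φ)) = L(p) g'`. -/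
lemma key {Δ : Set X} {φ : X → X} {ρ : X → ℝ} {M : ℝ}
    (hpot : IsPotential Δ φ ρ M)
    {H : Type*} [NormedAddCommGroup H] [InnerProductSpace ℂ H] [CompleteSpace H]
    {π : C₀(X, ℂ) →⋆ₙₐ[ℂ] (H →L[ℂ] H)} {T : H →L[ℂ] H}
    (hrep : IsRep Δ φ ρ π T)
    (a g c : C₀(X, ℂ)) (ha : ∀ x ∉ Δ, a x = 0)
    (hc : ∀ x, c x = a x * g (φ x)) (hc0 : ∀ x ∉ Δ, c x = 0) :
    π a * T * π g = π c * T := by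
  have hp : ∀ x ∉ Δ, (star a * a) x = 0 := fun x hx => by simp [ha x hx]
  obtain ⟨Lp, hLp⟩ := hpot.2.2.2 (star a * a) hp
  have Lmul : ∀ g' c' : C₀(X, ℂ), (∀ x, c' x = (star a * a) x * g' (φ x)) →
      (∀ x ∉ Δ, c' x = 0) → star T * π c' * T = π (Lp * g') := by
    intro g' c' hc' hc'0
    have hb : ∀ y, (Lp * g') y = ∑' x : Fiber Δ φ y, (ρ x.1 : ℂ) * c' x.1 := by
      intro y
      have ht : ∑' x : Fiber Δ φ y, (ρ x.1 : ℂ) * c' x.1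
          = (∑' x : Fiber Δ φ y, (ρ x.1 : ℂ) * (star a * a) x.1) * g' y := by
        rw [← tsum_mul_right]
        refine tsum_congr fun x => ?_
        have hx : φ x.1 = y := x.2.2
        rw [hc' x.1, hx]; ring
      rw [ht, ← hLp y]
      simp
    exact (hrep.2 c' (Lp * g') hc'0 hb).symm
  have h1 : star T * π (star a * a) * T = π Lp := (hrep.2 (star a * a) Lp hp hLp).symm
  have h2 : star T * π (star a * c) * T = π (Lp * g) := by
    refine Lmul g (star a * c) (fun x => ?_) (fun x hx => by simp [hc0 x hx])
    simp [hc x]; ring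
  have h3 : star T * π (star c * a) * T = π (Lp * star g) := by
    refine Lmul (star g) (star c * a) (fun x => ?_) (fun x hx => by simp [hc0 x hx])
    simp [hc x]; ring
  have h4 : star T * π (star c * c) * T = π (Lp * (star g * g)) := by
    refine Lmul (star g * g) (star c * c) (fun x => ?_) (fun x hx => by simp [hc0 x hx])
    simp [hc x]; ring
  have expand : star (π a * T * π g - π c * T) * (π a * T * π g - π c * T) =
      star (π g) * (star T * π (star a * a) * T) * π g
        - star (π g) * (star T * π (star a * c) * T)
        - (star T * π (star c * a) * T) * π g
        + star T * π (star c * c) * T := by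
    simp only [star_sub, star_mul, map_mul, map_star]
    noncomm_ring
  have hDD : star (π a * T * π g - π c * T) * (π a * T * π g - π c * T) = 0 := by
    rw [expand, h1, h2, h3, h4, ← map_star π g]
    simp only [← map_mul, ← map_sub, ← map_add]
    rw [show star g * Lp * g - star g * (Lp * g) - Lp * star g * g + Lp * (star g * g)
        = (0 : C₀(X, ℂ)) by ext y; simp; ring]
    exact map_zero π
  have hD : π a * T * π g - π c * T = 0 := (CStarRing.star_mul_self_eq_zero_iff _).mp hDD
  exact sub_eq_zero.mp hD

end TransferAux

/-- The closed linear span of `{π(a) T T* π(b) : a, b ∈ C₀(Δ)}` is closed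
under multiplication and adjoints, and its intersection with `π(C₀(X))` is an ideal in
`π(C₀(X))`. -/
theorem closed_span_is_algebra_and_ideal
    {X : Type*} [TopologicalSpace X] [LocallyCompactSpace X] [T2Space X]
    (Δ : Set X) (φ : X → X) (ρ : X → ℝ) (M : ℝ)
    (hΔ : IsOpen Δ) (hφ : ContinuousOn φ Δ)
    (hcount : ∀ y : X, (Fiber Δ φ y).Countable)
    (hpot : IsPotential Δ φ ρ M)
    {H : Type*} [NormedAddCommGroup H] [InnerProductSpace ℂ H] [CompleteSpace H]
    (π : C₀(X, ℂ) →⋆ₙₐ[ℂ] (H →L[ℂ] H)) (T : H →L[ℂ] H)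
    (hrep : IsRep Δ φ ρ π T)
    (S : Set (H →L[ℂ] H))
    (hS : S = closure (↑(Submodule.span ℂ {x : H →L[ℂ] H | ∃ a b : C₀(X, ℂ),
      (∀ z ∉ Δ, a z = 0) ∧ (∀ z ∉ Δ, b z = 0) ∧ x = π a * T * star T * π b}) :
        Set (H →L[ℂ] H))) :
    (∀ x ∈ S, ∀ y ∈ S, x * y ∈ S) ∧
    (∀ x ∈ S, star x ∈ S) ∧
    (∀ a : C₀(X, ℂ), ∀ x ∈ Set.range ⇑π ∩ S,
      π a * x ∈ Set.range ⇑π ∩ S ∧ x * π a ∈ Set.range ⇑π ∩ S) := by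
  set G : Set (H →L[ℂ] H) := {x : H →L[ℂ] H | ∃ a b : C₀(X, ℂ),
      (∀ z ∉ Δ, a z = 0) ∧ (∀ z ∉ Δ, b z = 0) ∧ x = π a * T * star T * π b} with hG
  -- the generating set is closed under multiplication
  have hmulG : ∀ x ∈ G, ∀ y ∈ G, x * y ∈ G := by
    rintro x ⟨a, b, ha, hb, rfl⟩ y ⟨c, d, hc, hd, rfl⟩
    have hbc : ∀ z ∉ Δ, (b * c) z = 0 := fun z hz => by simp [hb z hz]
    obtain ⟨e, he⟩ := hpot.2.2.2 (b * c) hbc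
    have h5 : π e = star T * (π b * π c) * T := by
      rw [hrep.2 (b * c) e hbc he, map_mul]
    obtain ⟨c', hc', hc'0⟩ := TransferAux.exists_mulComp hΔ hφ a e ha
    have hkey : π a * T * π e = π c' * T := TransferAux.key hpot hrep a e c' ha hc' hc'0
    refine ⟨c', d, hc'0, hd, ?_⟩
    calc (π a * T * star T * π b) * (π c * T * star T * π d)
        = (π a * T) * (star T * (π b * π c) * T) * (star T * π d) := by noncomm_ring
      _ = (π a * T) * π e * (star T * π d) := by rw [← h5]
      _ = (π c' * T) * (star T * π d) := by rw [← hkey]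
      _ = π c' * T * star T * π d := by noncomm_ring
  -- the generating set is closed under adjoints
  have hstarG : ∀ x ∈ G, star x ∈ G := by
    rintro x ⟨a, b, ha, hb, rfl⟩
    refine ⟨star b, star a, fun z hz => by simp [hb z hz], fun z hz => by simp [ha z hz], ?_⟩
    simp only [star_mul, star_star, map_star]
    noncomm_ring
  -- pass to the linear span
  have hmulV : ∀ x ∈ Submodule.span ℂ G, ∀ y ∈ Submodule.span ℂ G,
      x * y ∈ Submodule.span ℂ G := by
    have h : Submodule.span ℂ G * Submodule.span ℂ G ≤ Submodule.span ℂ G := by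
      rw [Submodule.span_mul_span]
      exact Submodule.span_le.mpr (Set.mul_subset_iff.mpr fun x hx y hy =>
        Submodule.subset_span (hmulG x hx y hy))
    exact fun x hx y hy => h (Submodule.mul_mem_mul hx hy)
  have hstarV : ∀ x ∈ Submodule.span ℂ G, star x ∈ Submodule.span ℂ G := by
    intro x hx
    refine Submodule.span_induction (p := fun x _ => star x ∈ Submodule.span ℂ G)
      (fun g hg => Submodule.subset_span (hstarG g hg)) (by simp) ?_ ?_ hx
    · intro u v _ _ hu hv
      rw [star_add]; exact Submodule.add_mem _ hu hv
    · intro r u _ hu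
      rw [star_smul]; exact Submodule.smul_mem _ _ hu
  refine ⟨?_, ?_, ?_⟩
  · -- closure closed under multiplication
    intro x hx y hy
    rw [hS] at hx hy ⊢
    exact map_mem_closure₂ continuous_mul hx hy hmulV
  · -- closure closed under star
    intro x hx
    rw [hS] at hx ⊢
    exact map_mem_closure continuous_star hx hstarV
  · -- ideal property
    intro a x hx
    obtain ⟨⟨c, hcx⟩, hxS⟩ := hx
    have hVl : ∀ u ∈ Submodule.span ℂ G, π a * u ∈ Submodule.span ℂ G := by
      intro u hu
      refine Submodule.span_induction (p := fun u _ => π a * u ∈ Submodule.span ℂ G)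
        ?_ (by simp) ?_ ?_ hu
      · rintro g ⟨b, d, hb, hd, rfl⟩
        refine Submodule.subset_span ⟨a * b, d, fun z hz => by simp [hb z hz], hd, ?_⟩
        rw [map_mul]; noncomm_ring
      · intro u v _ _ hu hv
        rw [mul_add]; exact Submodule.add_mem _ hu hv
      · intro r u _ hu
        rw [mul_smul_comm]; exact Submodule.smul_mem _ _ hu
    have hVr : ∀ u ∈ Submodule.span ℂ G, u * π a ∈ Submodule.span ℂ G := by
      intro u hu
      refine Submodule.span_induction (p := fun u _ => u * π a ∈ Submodule.span ℂ G)
        ?_ (by simp) ?_ ?_ hu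
      · rintro g ⟨b, d, hb, hd, rfl⟩
        refine Submodule.subset_span ⟨b, d * a, hb, fun z hz => by simp [hd z hz], ?_⟩
        rw [map_mul]; noncomm_ring
      · intro u v _ _ hu hv
        rw [add_mul]; exact Submodule.add_mem _ hu hv
      · intro r u _ hu
        rw [smul_mul_assoc]; exact Submodule.smul_mem _ _ hu
    constructor
    · refine ⟨⟨a * c, by rw [map_mul, hcx]⟩, ?_⟩
      rw [hS] at hxS ⊢
      exact map_mem_closure (continuous_mul_left (π a)) hxS hVl
    · refine ⟨⟨c * a, by rw [map_mul, hcx]⟩, ?_⟩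
      rw [hS] at hxS ⊢
      exact map_mem_closure (f := fun b => b * π a) (continuous_mul_right (π a)) hxS hVr
end
end

section
/- For every n ≥ 1: (i) sup_{y∈X} Σ_{x∈φ⁻ⁿ(y)} ρ_n(x) ≤ Mⁿ; (ii) for every a ∈ C₀(Δ_n) the function Lⁿ(a) : y ↦ Σ_{x∈φ⁻ⁿ(y)} ρ_n(x)a(x) belongs to C₀(X) and satisfies ‖Lⁿ(a)‖_∞ ≤ Mⁿ‖a‖_∞; (iii) Lⁿ satisfies the transfer identity: for every b ∈ C₀(X) and a ∈ C₀(Δ_n), the function (b∘φⁿ)·a (equal to b(φⁿ(x))a(x) on Δ_n and 0 elsewhere) belongs to C₀(Δ_n) and Lⁿ((b∘φⁿ)·a) = b·Lⁿ(a). -/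
open scoped ZeroAtInfty

noncomputable section

variable {X : Type*} [TopologicalSpace X]

/-- `Δ_n`: the natural domain of `φⁿ`. -/
def Dn (Δ : Set X) (φ : X → X) (n : ℕ) : Set X := {x | ∀ k < n, φ^[k] x ∈ Δ}

/-- `ρ_n(x) = Π_{i=0}^{n-1} ρ(φⁱ(x))`, the cocycle generated by `ρ`. -/
def rhon (φ : X → X) (ρ : X → ℝ) (n : ℕ) (x : X) : ℝ :=
  ∏ i ∈ Finset.range n, ρ (φ^[i] x)

/-- The fibre of `φⁿ` over `y`. -/
def Fibern (Δ : Set X) (φ : X → X) (n : ℕ) (y : X) : Set X :=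
  {x | x ∈ Dn Δ φ n ∧ φ^[n] x = y}

namespace ITAux

open Filter Topology

variable {Δ : Set X} {φ : X → X} {ρ : X → ℝ} {M : ℝ}

lemma mem_dn_succ {n : ℕ} {x : X} :
    x ∈ Dn Δ φ (n + 1) ↔ x ∈ Δ ∧ φ x ∈ Dn Δ φ n := by
  constructor
  · intro h
    refine ⟨by simpa using h 0 (Nat.succ_pos n), fun k hk => ?_⟩
    have := h (k + 1) (Nat.succ_lt_succ hk)
    rwa [Function.iterate_succ_apply] at this
  · rintro ⟨h1, h2⟩ k hk
    cases k with
    | zero => simpa using h1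
    | succ j =>
      rw [Function.iterate_succ_apply]
      exact h2 j (Nat.lt_of_succ_lt_succ hk)

lemma mem_fibern_succ {n : ℕ} {x y : X} :
    x ∈ Fibern Δ φ (n + 1) y ↔ x ∈ Δ ∧ φ x ∈ Fibern Δ φ n y := by
  unfold Fibern
  simp only [Set.mem_setOf_eq, mem_dn_succ, Function.iterate_succ_apply]
  tauto

lemma fibern_zero (Δ : Set X) (φ : X → X) (y : X) : Fibern Δ φ 0 y = {y} := by
  ext x
  simp [Fibern, Dn]

lemma rhon_succ (φ : X → X) (ρ : X → ℝ) (n : ℕ) (x : X) :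
    rhon φ ρ (n + 1) x = rhon φ ρ n (φ x) * ρ x := by
  simp [rhon, Finset.prod_range_succ', Function.iterate_succ_apply]

lemma rhon_nonneg (hρ : ∀ x ∈ Δ, 0 ≤ ρ x) {n : ℕ} {x : X} (hx : x ∈ Dn Δ φ n) :
    0 ≤ rhon φ ρ n x :=
  Finset.prod_nonneg fun i hi => hρ _ (hx i (Finset.mem_range.mp hi))

/-- The fibre of `φ^[n+1]` decomposes as a disjoint union of fibres of `φ` over the
fibre of `φ^[n]`. -/
def fiberEquiv (Δ : Set X) (φ : X → X) (n : ℕ) (y : X) :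
    (Σ z : Fibern Δ φ n y, Fiber Δ φ z.1) ≃ Fibern Δ φ (n + 1) y where
  toFun p := ⟨p.2.1, mem_fibern_succ.mpr ⟨p.2.2.1, by rw [p.2.2.2]; exact p.1.2⟩⟩
  invFun x := ⟨⟨φ x.1, (mem_fibern_succ.mp x.2).2⟩, ⟨x.1, (mem_fibern_succ.mp x.2).1, rfl⟩⟩
  left_inv := by
    rintro ⟨z, x⟩
    have hzx : φ x.1 = z.1 := x.2.2
    refine Sigma.ext (Subtype.ext hzx) ?_
    refine (Subtype.heq_iff_coe_eq ?_).mpr rfl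
    intro w
    show w ∈ Fiber Δ φ (φ x.1) ↔ w ∈ Fiber Δ φ z.1
    rw [hzx]
  right_inv := by rintro ⟨x, hx⟩; rfl


set_option maxHeartbeats 1000000 in
lemma summable_rhon (hpot : IsPotential Δ φ ρ M) (n : ℕ) :
    ∀ y : X, Summable (fun x : Fibern Δ φ n y => rhon φ ρ n x.1) ∧
      (∑' x : Fibern Δ φ n y, rhon φ ρ n x.1) ≤ M ^ n := by
  obtain ⟨hρ, hsum, hbd, -⟩ := hpot
  induction n with
  | zero =>
    intro y
    have hfin : (Fibern Δ φ 0 y).Finite := by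
      rw [fibern_zero]; exact Set.finite_singleton y
    haveI := hfin.to_subtype
    constructor
    · exact Summable.of_finite
    · rw [fibern_zero, tsum_singleton]
      simp [rhon]
  | succ n ih =>
    intro y
    have hM : 0 ≤ M :=
      le_trans (tsum_nonneg fun x : Fiber Δ φ y => hρ x.1 x.2.1) (hbd y)
    have hnng : ∀ z : Fibern Δ φ n y, 0 ≤ rhon φ ρ n z.1 :=
      fun z => rhon_nonneg hρ z.2.1
    have h1 : ∀ z : Fibern Δ φ n y,
        Summable fun x : Fiber Δ φ z.1 => rhon φ ρ n z.1 * ρ x.1 :=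
      fun z => (hsum z.1).mul_left _
    have hle : ∀ z : Fibern Δ φ n y,
        (∑' x : Fiber Δ φ z.1, rhon φ ρ n z.1 * ρ x.1) ≤ rhon φ ρ n z.1 * M := by
      intro z
      rw [tsum_mul_left]
      exact mul_le_mul_of_nonneg_left (hbd z.1) (hnng z)
    have h2 : Summable fun z : Fibern Δ φ n y =>
        ∑' x : Fiber Δ φ z.1, rhon φ ρ n z.1 * ρ x.1 := by
      refine Summable.of_nonneg_of_le
        (fun z => tsum_nonneg fun x => mul_nonneg (hnng z) (hρ x.1 x.2.1))
        (fun z => hle z) ((ih y).1.mul_right M)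
    have hS : Summable (fun p : Σ z : Fibern Δ φ n y, Fiber Δ φ z.1 =>
        rhon φ ρ n p.1.1 * ρ p.2.1) := by
      refine (summable_sigma_of_nonneg ?_).mpr ⟨?_, ?_⟩
      · exact fun p => mul_nonneg (hnng p.1) (hρ p.2.1 p.2.2.1)
      · exact h1
      · exact h2
    have key2 : (∑' p : Σ z : Fibern Δ φ n y, Fiber Δ φ z.1,
        rhon φ ρ n p.1.1 * ρ p.2.1) ≤ M ^ (n + 1) := by
      rw [Summable.tsum_sigma hS]
      calc (∑' z : Fibern Δ φ n y, ∑' x : Fiber Δ φ z.1, rhon φ ρ n z.1 * ρ x.1)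
          ≤ ∑' z : Fibern Δ φ n y, rhon φ ρ n z.1 * M :=
            Summable.tsum_le_tsum hle h2 ((ih y).1.mul_right M)
        _ = (∑' z : Fibern Δ φ n y, rhon φ ρ n z.1) * M := tsum_mul_right
        _ ≤ M ^ n * M := mul_le_mul_of_nonneg_right (ih y).2 hM
        _ = M ^ (n + 1) := (pow_succ M n).symm
    have hfe : ∀ p : Σ z : Fibern Δ φ n y, Fiber Δ φ z.1,
        rhon φ ρ (n + 1) ((fiberEquiv Δ φ n y) p).1 = rhon φ ρ n p.1.1 * ρ p.2.1 := by
      rintro ⟨z, x⟩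
      show rhon φ ρ (n + 1) x.1 = _
      rw [rhon_succ, x.2.2]
    constructor
    · rw [← (fiberEquiv Δ φ n y).summable_iff]
      exact hS.congr fun p => (hfe p).symm
    · calc (∑' x : Fibern Δ φ (n + 1) y, rhon φ ρ (n + 1) x.1)
          = ∑' p : Σ z : Fibern Δ φ n y, Fiber Δ φ z.1,
              rhon φ ρ (n + 1) ((fiberEquiv Δ φ n y) p).1 :=
            ((fiberEquiv Δ φ n y).tsum_eq
              (fun x : Fibern Δ φ (n + 1) y => rhon φ ρ (n + 1) x.1)).symm
        _ = ∑' p : Σ z : Fibern Δ φ n y, Fiber Δ φ z.1, rhon φ ρ n p.1.1 * ρ p.2.1 :=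
            tsum_congr hfe
        _ ≤ M ^ (n + 1) := key2


lemma c0_norm_apply_le (a : C₀(X, ℂ)) (x : X) : ‖a x‖ ≤ ‖a‖ := by
  calc ‖a x‖ = ‖a.toBCF x‖ := rfl
    _ ≤ ‖a.toBCF‖ := a.toBCF.norm_coe_le_norm x
    _ = ‖a‖ := ZeroAtInftyContinuousMap.norm_toBCF_eq_norm

lemma exists_Ln (hpot : IsPotential Δ φ ρ M) (n : ℕ) :
    ∀ a : C₀(X, ℂ), (∀ x ∉ Dn Δ φ n, a x = 0) →
      ∃ b : C₀(X, ℂ), ∀ y : X,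
        b y = ∑' x : Fibern Δ φ n y, (rhon φ ρ n x.1 : ℂ) * a x.1 := by
  induction n with
  | zero =>
    intro a _
    refine ⟨a, fun y => ?_⟩
    have hy : y ∈ Fibern Δ φ 0 y :=
      ⟨fun k hk => absurd hk (Nat.not_lt_zero k), by simp⟩
    have h0 : (∑' x : Fibern Δ φ 0 y, (rhon φ ρ 0 x.1 : ℂ) * a x.1)
        = (rhon φ ρ 0 y : ℂ) * a y := by
      refine tsum_eq_single (⟨y, hy⟩ : Fibern Δ φ 0 y) ?_
      intro x hx
      exact absurd (Subtype.ext (by simpa using x.2.2)) hx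
    rw [h0]
    simp [rhon]
  | succ n ih =>
    intro a ha
    have haΔ : ∀ x ∉ Δ, a x = 0 := fun x hx =>
      ha x fun h => hx (mem_dn_succ.mp h).1
    obtain ⟨b₁, hb₁⟩ := hpot.2.2.2 a haΔ
    have hb₁0 : ∀ z ∉ Dn Δ φ n, b₁ z = 0 := by
      intro z hz
      rw [hb₁ z]
      have hzero : ∀ x : Fiber Δ φ z, (ρ x.1 : ℂ) * a x.1 = 0 := by
        intro x
        have : a x.1 = 0 :=
          ha x.1 fun h => hz (by rw [← x.2.2]; exact (mem_dn_succ.mp h).2)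
        rw [this, mul_zero]
      rw [tsum_congr hzero, tsum_zero]
    obtain ⟨b, hb⟩ := ih b₁ hb₁0
    refine ⟨b, fun y => ?_⟩
    rw [hb y]
    have hnng : ∀ z : Fibern Δ φ n y, 0 ≤ rhon φ ρ n z.1 :=
      fun z => rhon_nonneg hpot.1 z.2.1
    have hfe : ∀ p : Σ z : Fibern Δ φ n y, Fiber Δ φ z.1,
        rhon φ ρ (n + 1) ((fiberEquiv Δ φ n y) p).1 = rhon φ ρ n p.1.1 * ρ p.2.1 := by
      rintro ⟨z, x⟩
      show rhon φ ρ (n + 1) x.1 = _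
      rw [rhon_succ, x.2.2]
    have hs2 : Summable (fun p : Σ z : Fibern Δ φ n y, Fiber Δ φ z.1 =>
        rhon φ ρ n p.1.1 * ρ p.2.1) := by
      have h := ((fiberEquiv Δ φ n y).summable_iff.mpr
        (summable_rhon hpot (n + 1) y).1)
      exact h.congr hfe
    have hG : Summable (fun p : Σ z : Fibern Δ φ n y, Fiber Δ φ z.1 =>
        (rhon φ ρ n p.1.1 : ℂ) * ((ρ p.2.1 : ℂ) * a p.2.1)) := by
      refine Summable.of_norm_bounded (hs2.mul_right ‖a‖) ?_
      rintro ⟨z, x⟩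
      show ‖(rhon φ ρ n z.1 : ℂ) * ((ρ x.1 : ℂ) * a x.1)‖ ≤ rhon φ ρ n z.1 * ρ x.1 * ‖a‖
      rw [norm_mul, norm_mul, Complex.norm_real, Complex.norm_real,
        Real.norm_eq_abs, Real.norm_eq_abs, abs_of_nonneg (hnng z),
        abs_of_nonneg (hpot.1 x.1 x.2.1), mul_assoc]
      refine mul_le_mul_of_nonneg_left ?_ (hnng z)
      exact mul_le_mul_of_nonneg_left (c0_norm_apply_le a x.1) (hpot.1 x.1 x.2.1)
    calc (∑' z : Fibern Δ φ n y, (rhon φ ρ n z.1 : ℂ) * b₁ z.1)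
        = ∑' z : Fibern Δ φ n y, (rhon φ ρ n z.1 : ℂ)
            * ∑' x : Fiber Δ φ z.1, (ρ x.1 : ℂ) * a x.1 :=
          tsum_congr fun z => by rw [hb₁ z.1]
      _ = ∑' z : Fibern Δ φ n y, ∑' x : Fiber Δ φ z.1,
            (rhon φ ρ n z.1 : ℂ) * ((ρ x.1 : ℂ) * a x.1) :=
          tsum_congr fun z => tsum_mul_left.symm
      _ = ∑' p : Σ z : Fibern Δ φ n y, Fiber Δ φ z.1,
            (rhon φ ρ n p.1.1 : ℂ) * ((ρ p.2.1 : ℂ) * a p.2.1) :=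
          (Summable.tsum_sigma hG).symm
      _ = ∑' x : Fibern Δ φ (n + 1) y, (rhon φ ρ (n + 1) x.1 : ℂ) * a x.1 := by
          rw [← (fiberEquiv Δ φ n y).tsum_eq
            (fun x : Fibern Δ φ (n + 1) y => (rhon φ ρ (n + 1) x.1 : ℂ) * a x.1)]
          refine tsum_congr ?_
          rintro ⟨z, x⟩
          show (rhon φ ρ n z.1 : ℂ) * ((ρ x.1 : ℂ) * a x.1)
            = (rhon φ ρ (n + 1) x.1 : ℂ) * a x.1
          rw [rhon_succ, x.2.2]
          push_cast
          ring


lemma norm_Ln_le (hpot : IsPotential Δ φ ρ M) (n : ℕ) (a b : C₀(X, ℂ))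
    (hb : ∀ y : X, b y = ∑' x : Fibern Δ φ n y, (rhon φ ρ n x.1 : ℂ) * a x.1) :
    ‖b‖ ≤ M ^ n * ‖a‖ := by
  rcases isEmpty_or_nonempty X with h | h
  · have hb0 : b = 0 := ZeroAtInftyContinuousMap.ext fun x => (h.elim x)
    have ha0 : a = 0 := ZeroAtInftyContinuousMap.ext fun x => (h.elim x)
    rw [hb0, ha0]
    simp
  · obtain ⟨y₀⟩ := h
    have hM : 0 ≤ M :=
      le_trans (tsum_nonneg fun x : Fiber Δ φ y₀ => hpot.1 x.1 x.2.1) (hpot.2.2.1 y₀)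
    rw [← ZeroAtInftyContinuousMap.norm_toBCF_eq_norm]
    refine (BoundedContinuousFunction.norm_le
      (mul_nonneg (pow_nonneg hM n) (norm_nonneg a))).mpr fun y => ?_
    show ‖b y‖ ≤ M ^ n * ‖a‖
    rw [hb y]
    have hnng : ∀ x : Fibern Δ φ n y, 0 ≤ rhon φ ρ n x.1 :=
      fun x => rhon_nonneg hpot.1 x.2.1
    have hsum := summable_rhon hpot n y
    have hmaj : Summable (fun x : Fibern Δ φ n y => rhon φ ρ n x.1 * ‖a‖) :=
      hsum.1.mul_right _
    have hterm : ∀ x : Fibern Δ φ n y,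
        ‖(rhon φ ρ n x.1 : ℂ) * a x.1‖ ≤ rhon φ ρ n x.1 * ‖a‖ := by
      intro x
      rw [norm_mul, Complex.norm_real, Real.norm_eq_abs, abs_of_nonneg (hnng x)]
      exact mul_le_mul_of_nonneg_left (c0_norm_apply_le a x.1) (hnng x)
    have hnorm : Summable (fun x : Fibern Δ φ n y => ‖(rhon φ ρ n x.1 : ℂ) * a x.1‖) :=
      Summable.of_nonneg_of_le (fun x => norm_nonneg _) hterm hmaj
    calc ‖∑' x : Fibern Δ φ n y, (rhon φ ρ n x.1 : ℂ) * a x.1‖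
        ≤ ∑' x : Fibern Δ φ n y, ‖(rhon φ ρ n x.1 : ℂ) * a x.1‖ :=
          norm_tsum_le_tsum_norm hnorm
      _ ≤ ∑' x : Fibern Δ φ n y, rhon φ ρ n x.1 * ‖a‖ :=
          Summable.tsum_le_tsum hterm hnorm hmaj
      _ = (∑' x : Fibern Δ φ n y, rhon φ ρ n x.1) * ‖a‖ := tsum_mul_right
      _ ≤ M ^ n * ‖a‖ := mul_le_mul_of_nonneg_right hsum.2 (norm_nonneg a)

lemma isOpen_dn (hΔ : IsOpen Δ) (hφ : ContinuousOn φ Δ) (n : ℕ) :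
    IsOpen (Dn Δ φ n) := by
  induction n with
  | zero =>
    have : Dn Δ φ 0 = Set.univ := by ext x; simp [Dn]
    rw [this]; exact isOpen_univ
  | succ n ih =>
    have : Dn Δ φ (n + 1) = Δ ∩ φ ⁻¹' Dn Δ φ n := by
      ext x; simpa [Set.mem_inter_iff] using mem_dn_succ
    rw [this]
    exact hφ.isOpen_inter_preimage hΔ ih

lemma continuousOn_iterate (hφ : ContinuousOn φ Δ) (n : ℕ) :
    ContinuousOn (φ^[n]) (Dn Δ φ n) := by
  induction n with
  | zero => simpa using continuousOn_id
  | succ n ih =>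
    have heq : ∀ x : X, φ^[n + 1] x = φ^[n] (φ x) := fun x =>
      Function.iterate_succ_apply φ n x
    have : ContinuousOn (fun x => φ^[n] (φ x)) (Dn Δ φ (n + 1)) := by
      refine ContinuousOn.comp ih (hφ.mono fun x hx => (mem_dn_succ.mp hx).1) ?_
      exact fun x hx => (mem_dn_succ.mp hx).2
    exact this.congr fun x _ => heq x

lemma transfer_identity [LocallyCompactSpace X] [T2Space X]
    (hΔ : IsOpen Δ) (hφ : ContinuousOn φ Δ) (hpot : IsPotential Δ φ ρ M) (n : ℕ)
    (b a : C₀(X, ℂ)) (ha : ∀ x ∉ Dn Δ φ n, a x = 0) :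
    ∃ c : C₀(X, ℂ),
      (∀ x ∈ Dn Δ φ n, c x = b (φ^[n] x) * a x) ∧ (∀ x ∉ Dn Δ φ n, c x = 0) ∧
      ∀ y : X, (∑' x : Fibern Δ φ n y, (rhon φ ρ n x.1 : ℂ) * c x.1)
        = b y * ∑' x : Fibern Δ φ n y, (rhon φ ρ n x.1 : ℂ) * a x.1 := by
  classical
  set g : X → ℂ := (Dn Δ φ n).indicator (fun x => b (φ^[n] x) * a x) with hg
  have hbdg : ∀ z : X, ‖g z‖ ≤ ‖b‖ * ‖a z‖ := by
    intro z
    by_cases hz : z ∈ Dn Δ φ n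
    · rw [hg, Set.indicator_of_mem hz, norm_mul]
      exact mul_le_mul_of_nonneg_right (c0_norm_apply_le b _) (norm_nonneg _)
    · rw [hg, Set.indicator_of_notMem hz, norm_zero]
      positivity
  have hg_cont : Continuous g := by
    rw [continuous_iff_continuousAt]
    intro x
    by_cases hx : x ∈ Dn Δ φ n
    · have hco : ContinuousOn (fun z => b (φ^[n] z) * a z) (Dn Δ φ n) :=
        (b.continuous.comp_continuousOn (continuousOn_iterate hφ n)).mul
          a.continuous.continuousOn
      have hca : ContinuousAt (fun z => b (φ^[n] z) * a z) x :=
        hco.continuousAt ((isOpen_dn hΔ hφ n).mem_nhds hx)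
      refine hca.congr ?_
      filter_upwards [(isOpen_dn hΔ hφ n).mem_nhds hx] with z hz
      exact (Set.indicator_of_mem hz fun w => b (φ^[n] w) * a w).symm
    · have hax : a x = 0 := ha x hx
      have ht : Filter.Tendsto g (nhds x) (nhds 0) := by
        refine squeeze_zero_norm hbdg ?_
        have hc : Continuous fun z => ‖b‖ * ‖a z‖ :=
          continuous_const.mul a.continuous.norm
        have := hc.tendsto x
        simpa [hax] using this
      have hgx : g x = 0 := Set.indicator_of_notMem hx _
      show Filter.Tendsto g (nhds x) (nhds (g x))
      rw [hgx]
      exact ht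
  have hg_inf : Filter.Tendsto g (Filter.cocompact X) (nhds 0) := by
    refine squeeze_zero_norm hbdg ?_
    have h1 : Filter.Tendsto (fun z => a z) (Filter.cocompact X) (nhds 0) :=
      zero_at_infty a
    have := h1.norm.const_mul ‖b‖
    simpa using this
  refine ⟨⟨⟨g, hg_cont⟩, hg_inf⟩, fun x hx => ?_, fun x hx => ?_, fun y => ?_⟩
  · show g x = _
    exact Set.indicator_of_mem hx _
  · show g x = 0
    exact Set.indicator_of_notMem hx _
  show (∑' x : Fibern Δ φ n y, (rhon φ ρ n x.1 : ℂ) * g x.1)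
    = b y * ∑' x : Fibern Δ φ n y, (rhon φ ρ n x.1 : ℂ) * a x.1
  have hcongr : ∀ x : Fibern Δ φ n y,
      (rhon φ ρ n x.1 : ℂ) * g x.1 = b y * ((rhon φ ρ n x.1 : ℂ) * a x.1) := by
    intro x
    rw [hg, Set.indicator_of_mem x.2.1, x.2.2]
    ring
  calc (∑' x : Fibern Δ φ n y, (rhon φ ρ n x.1 : ℂ) * g x.1)
      = ∑' x : Fibern Δ φ n y, b y * ((rhon φ ρ n x.1 : ℂ) * a x.1) :=
        tsum_congr hcongr
    _ = b y * ∑' x : Fibern Δ φ n y, (rhon φ ρ n x.1 : ℂ) * a x.1 := tsum_mul_left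

end ITAux

/-- The iterated transfer operator `Lⁿ` given by the cocycle `ρ_n`:
boundedness by `Mⁿ`, membership of `Lⁿ(a)` in `C₀(X)` with `‖Lⁿ(a)‖ ≤ Mⁿ‖a‖`, and the
transfer identity `Lⁿ((b∘φⁿ)·a) = b·Lⁿ(a)`. -/
theorem iterated_transfer_operator
    {X : Type*} [TopologicalSpace X] [LocallyCompactSpace X] [T2Space X]
    (Δ : Set X) (φ : X → X) (ρ : X → ℝ) (M : ℝ)
    (hΔ : IsOpen Δ) (hφ : ContinuousOn φ Δ)
    (hcount : ∀ y : X, (Fiber Δ φ y).Countable)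
    (hpot : IsPotential Δ φ ρ M)
    (n : ℕ) (hn : 1 ≤ n) :
    -- (i)
    (∀ y : X, Summable (fun x : Fibern Δ φ n y => rhon φ ρ n x.1) ∧
      (∑' x : Fibern Δ φ n y, rhon φ ρ n x.1) ≤ M ^ n) ∧
    -- (ii)
    (∀ a : C₀(X, ℂ), (∀ x ∉ Dn Δ φ n, a x = 0) →
      ∃ b : C₀(X, ℂ),
        (∀ y : X, b y = ∑' x : Fibern Δ φ n y, (rhon φ ρ n x.1 : ℂ) * a x.1) ∧
        ‖b‖ ≤ M ^ n * ‖a‖) ∧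
    -- (iii)
    (∀ b a : C₀(X, ℂ), (∀ x ∉ Dn Δ φ n, a x = 0) →
      ∃ c : C₀(X, ℂ),
        (∀ x ∈ Dn Δ φ n, c x = b (φ^[n] x) * a x) ∧ (∀ x ∉ Dn Δ φ n, c x = 0) ∧
        ∀ y : X, (∑' x : Fibern Δ φ n y, (rhon φ ρ n x.1 : ℂ) * c x.1)
          = b y * ∑' x : Fibern Δ φ n y, (rhon φ ρ n x.1 : ℂ) * a x.1) := by
  refine ⟨ITAux.summable_rhon hpot n, fun a ha => ?_,
    fun b a ha => ITAux.transfer_identity hΔ hφ hpot n b a ha⟩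
  obtain ⟨b, hb⟩ := ITAux.exists_Ln hpot n a ha
  exact ⟨b, hb, ITAux.norm_Ln_le hpot n a b hb⟩
end
end

section
/- Consider the Hilbert space ℓ²(X × ℤ) with standard orthonormal basis {δ_{(x,n)}} and the *-homomorphism π̃ : C₀(X) → B(ℓ²(X × ℤ)) given by (π̃(a)h)(x,n) = a(x)h(x,n). Then: (i) there is a unique bounded operator T̃ ∈ B(ℓ²(X × ℤ)) with (T̃h)(x,n) = √ρ(x)·h(φ(x), n−1) for x ∈ Δ and (T̃h)(x,n) = 0 for x ∉ Δ; (ii) for all integers k, l ≥ 0, all a ∈ C₀(Δ_k), b ∈ C₀(Δ_l), and all (x,n) ∈ X × ℤ, the diagonal matrix coefficient ⟨δ_{(x,n)}, π̃(a) T̃ᵏ (T̃*)ˡ π̃(b) δ_{(x,n)}⟩ equals 0 if k ≠ l, and equals a(x)·b(x)·ρ_k(x) if k = l (the value being 0 when x ∉ Δ_k, since a vanishes there). -/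
open scoped ZeroAtInfty

noncomputable section

variable {X : Type*} [TopologicalSpace X]

/-- The defining property of the regular operator `T̃` on `ℓ²(X × ℤ)`:
`(T̃ h)(x, n) = √ρ(x) · h(φ(x), n − 1)` for `x ∈ Δ` and `(T̃ h)(x, n) = 0` otherwise. -/
def IsRegularOperator (Δ : Set X) (φ : X → X) (ρ : X → ℝ)
    (T : lp (fun _ : X × ℤ => ℂ) 2 →L[ℂ] lp (fun _ : X × ℤ => ℂ) 2) : Prop :=
  (∀ (h : lp (fun _ : X × ℤ => ℂ) 2) (p : X × ℤ), p.1 ∈ Δ →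
      T h p = (Real.sqrt (ρ p.1) : ℂ) * h (φ p.1, p.2 - 1)) ∧
  (∀ (h : lp (fun _ : X × ℤ => ℂ) 2) (p : X × ℤ), p.1 ∉ Δ → T h p = 0)

namespace RegRepAux

open Classical in
/-- candidate values of the regular operator -/
def Tfun (Δ : Set X) (φ : X → X) (ρ : X → ℝ)
    (h : lp (fun _ : X × ℤ => ℂ) 2) (p : X × ℤ) : ℂ :=
  if p.1 ∈ Δ then (Real.sqrt (ρ p.1) : ℂ) * h (φ p.1, p.2 - 1) else 0

open Classical in
lemma fiber_sum_le {Δ : Set X} {φ : X → X} {ρ : X → ℝ} {M : ℝ}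
    (hρ0 : ∀ x ∈ Δ, 0 ≤ ρ x)
    (hsum : ∀ y : X, Summable fun x : Fiber Δ φ y => ρ x.1)
    (hMb : ∀ y : X, (∑' x : Fiber Δ φ y, ρ x.1) ≤ M)
    (q : X × ℤ) (S : Finset (X × ℤ)) :
    ∑ p ∈ S.filter (fun p => (φ p.1, p.2 - 1) = q), (if p.1 ∈ Δ then ρ p.1 else 0) ≤ M := by
  classical
  set F := S.filter (fun p => (φ p.1, p.2 - 1) = q) with hF
  have hinj : ∀ p ∈ F, ∀ p' ∈ F, p.1 = p'.1 → p = p' := by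
    intro p hp p' hp' h1
    have h2 : (φ p.1, p.2 - 1) = q := (Finset.mem_filter.mp hp).2
    have h2' : (φ p'.1, p'.2 - 1) = q := (Finset.mem_filter.mp hp').2
    have e2 : p.2 - 1 = q.2 := congrArg Prod.snd h2
    have e2' : p'.2 - 1 = q.2 := congrArg Prod.snd h2'
    exact Prod.ext h1 (by omega)
  have him : ∑ x ∈ F.image Prod.fst, (if x ∈ Δ then ρ x else 0)
      = ∑ p ∈ F, (if p.1 ∈ Δ then ρ p.1 else 0) := Finset.sum_image hinj
  rw [← him]
  set G := F.image Prod.fst with hG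
  have hGsub : ∀ x ∈ G, x ∈ Δ → x ∈ Fiber Δ φ q.1 := by
    intro x hx hxΔ
    obtain ⟨p, hpF, rfl⟩ := Finset.mem_image.mp hx
    exact ⟨hxΔ, congrArg Prod.fst (Finset.mem_filter.mp hpF).2⟩
  have hind0 : ∀ x : X, 0 ≤ Set.indicator (Fiber Δ φ q.1) ρ x :=
    fun x => Set.indicator_nonneg (fun y hy => hρ0 y hy.1) x
  calc ∑ x ∈ G, (if x ∈ Δ then ρ x else 0)
      ≤ ∑ x ∈ G, Set.indicator (Fiber Δ φ q.1) ρ x := by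
        refine Finset.sum_le_sum fun x hx => ?_
        by_cases hxΔ : x ∈ Δ
        · rw [if_pos hxΔ, Set.indicator_of_mem (hGsub x hx hxΔ)]
        · rw [if_neg hxΔ]; exact hind0 x
    _ ≤ ∑' x, Set.indicator (Fiber Δ φ q.1) ρ x :=
        Summable.sum_le_tsum G (fun x _ => hind0 x)
          (summable_subtype_iff_indicator.mp (hsum q.1))
    _ = ∑' x : Fiber Δ φ q.1, ρ x.1 := (tsum_subtype _ _).symm
    _ ≤ M := hMb q.1

lemma sum_bound {Δ : Set X} {φ : X → X} {ρ : X → ℝ} {M : ℝ}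
    (hρ0 : ∀ x ∈ Δ, 0 ≤ ρ x)
    (hsum : ∀ y : X, Summable fun x : Fiber Δ φ y => ρ x.1)
    (hMb : ∀ y : X, (∑' x : Fiber Δ φ y, ρ x.1) ≤ M) [Nonempty X]
    (h : lp (fun _ : X × ℤ => ℂ) 2) (S : Finset (X × ℤ)) :
    ∑ p ∈ S, ‖Tfun Δ φ ρ h p‖ ^ (2:ℝ) ≤ M * ‖h‖ ^ (2:ℝ) := by
  classical
  have hM0 : 0 ≤ M := by
    have h0 : 0 ≤ ∑' x : Fiber Δ φ (Classical.arbitrary X), ρ x.1 :=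
      tsum_nonneg fun x => hρ0 x.1 x.2.1
    exact h0.trans (hMb (Classical.arbitrary X))
  have hterm : ∀ p : X × ℤ, ‖Tfun Δ φ ρ h p‖ ^ (2:ℝ)
      = (if p.1 ∈ Δ then ρ p.1 else 0) * ‖h (φ p.1, p.2 - 1)‖ ^ (2:ℝ) := by
    intro p
    by_cases hp : p.1 ∈ Δ
    · simp only [Tfun, if_pos hp]
      rw [norm_mul, Real.mul_rpow (norm_nonneg _) (norm_nonneg _)]
      congr 1
      rw [Complex.norm_real, Real.norm_eq_abs, abs_of_nonneg (Real.sqrt_nonneg _),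
        show (2:ℝ) = ((2:ℕ):ℝ) by norm_num, Real.rpow_natCast]
      exact Real.sq_sqrt (hρ0 _ hp)
    · simp [Tfun, if_neg hp, Real.zero_rpow]
  calc ∑ p ∈ S, ‖Tfun Δ φ ρ h p‖ ^ (2:ℝ)
      = ∑ p ∈ S, (if p.1 ∈ Δ then ρ p.1 else 0) * ‖h (φ p.1, p.2 - 1)‖ ^ (2:ℝ) :=
        Finset.sum_congr rfl fun p _ => hterm p
    _ = ∑ q ∈ S.image (fun p : X × ℤ => (φ p.1, p.2 - 1)),
          ∑ p ∈ S.filter (fun p => (φ p.1, p.2 - 1) = q),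
            (if p.1 ∈ Δ then ρ p.1 else 0) * ‖h (φ p.1, p.2 - 1)‖ ^ (2:ℝ) :=
        (Finset.sum_fiberwise_of_maps_to (fun p hp => Finset.mem_image_of_mem _ hp) _).symm
    _ ≤ ∑ q ∈ S.image (fun p : X × ℤ => (φ p.1, p.2 - 1)), M * ‖h q‖ ^ (2:ℝ) := by
        refine Finset.sum_le_sum fun q _ => ?_
        have hrw : ∑ p ∈ S.filter (fun p => (φ p.1, p.2 - 1) = q),
              (if p.1 ∈ Δ then ρ p.1 else 0) * ‖h (φ p.1, p.2 - 1)‖ ^ (2:ℝ)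
            = (∑ p ∈ S.filter (fun p => (φ p.1, p.2 - 1) = q),
                (if p.1 ∈ Δ then ρ p.1 else 0)) * ‖h q‖ ^ (2:ℝ) := by
          rw [Finset.sum_mul]
          refine Finset.sum_congr rfl fun p hp => ?_
          rw [(Finset.mem_filter.mp hp).2]
        rw [hrw]
        exact mul_le_mul_of_nonneg_right (fiber_sum_le hρ0 hsum hMb q S)
          (Real.rpow_nonneg (norm_nonneg _) _)
    _ = M * ∑ q ∈ S.image (fun p : X × ℤ => (φ p.1, p.2 - 1)), ‖h q‖ ^ (2:ℝ) :=
        (Finset.mul_sum _ _ _).symm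
    _ ≤ M * ‖h‖ ^ (2:ℝ) := by
        refine mul_le_mul_of_nonneg_left ?_ hM0
        simpa using lp.sum_rpow_le_norm_rpow (p := 2) (by norm_num) h
          (S.image (fun p : X × ℤ => (φ p.1, p.2 - 1)))

lemma exists_regular {Δ : Set X} {φ : X → X} {ρ : X → ℝ} {M : ℝ}
    (hρ0 : ∀ x ∈ Δ, 0 ≤ ρ x)
    (hsum : ∀ y : X, Summable fun x : Fiber Δ φ y => ρ x.1)
    (hMb : ∀ y : X, (∑' x : Fiber Δ φ y, ρ x.1) ≤ M) :
    ∃ T : lp (fun _ : X × ℤ => ℂ) 2 →L[ℂ] lp (fun _ : X × ℤ => ℂ) 2,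
      IsRegularOperator Δ φ ρ T := by
  classical
  rcases isEmpty_or_nonempty X with hX | hX
  · exact ⟨0, fun h p => (hX.false p.1).elim, fun h p => (hX.false p.1).elim⟩
  have hM0 : 0 ≤ M := by
    have h0 : 0 ≤ ∑' x : Fiber Δ φ (Classical.arbitrary X), ρ x.1 :=
      tsum_nonneg fun x => hρ0 x.1 x.2.1
    exact h0.trans (hMb (Classical.arbitrary X))
  have mem : ∀ h : lp (fun _ : X × ℤ => ℂ) 2, Memℓp (Tfun Δ φ ρ h) 2 := by
    intro h
    refine memℓp_gen' (C := M * ‖h‖ ^ (2:ℝ)) fun S => ?_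
    simpa using sum_bound hρ0 hsum hMb h S
  let L : lp (fun _ : X × ℤ => ℂ) 2 →ₗ[ℂ] lp (fun _ : X × ℤ => ℂ) 2 :=
    { toFun := fun h => ⟨Tfun Δ φ ρ h, mem h⟩
      map_add' := by
        intro h g
        apply lp.ext
        funext p
        have : ((h + g : lp (fun _ : X × ℤ => ℂ) 2) : ∀ _, ℂ) (φ p.1, p.2 - 1)
            = h (φ p.1, p.2 - 1) + g (φ p.1, p.2 - 1) := by
          rw [lp.coeFn_add, Pi.add_apply]
        show Tfun Δ φ ρ (h + g) p = Tfun Δ φ ρ h p + Tfun Δ φ ρ g p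
        by_cases hp : p.1 ∈ Δ <;> simp [Tfun, hp, this, mul_add]
      map_smul' := by
        intro c h
        apply lp.ext
        funext p
        have : ((c • h : lp (fun _ : X × ℤ => ℂ) 2) : ∀ _, ℂ) (φ p.1, p.2 - 1)
            = c * h (φ p.1, p.2 - 1) := by
          rw [lp.coeFn_smul, Pi.smul_apply, smul_eq_mul]
        show Tfun Δ φ ρ (c • h) p = c * Tfun Δ φ ρ h p
        by_cases hp : p.1 ∈ Δ <;> simp [Tfun, hp, this] <;> ring }
  have hbound : ∀ h, ‖L h‖ ≤ Real.sqrt M * ‖h‖ := by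
    intro h
    refine lp.norm_le_of_forall_sum_le (by norm_num)
      (mul_nonneg (Real.sqrt_nonneg _) (norm_nonneg _)) fun S => ?_
    have h1 : ∑ p ∈ S, ‖(L h : ∀ _, ℂ) p‖ ^ (2:ℝ) ≤ M * ‖h‖ ^ (2:ℝ) := sum_bound hρ0 hsum hMb h S
    have h2 : (Real.sqrt M * ‖h‖) ^ (2:ℝ) = M * ‖h‖ ^ (2:ℝ) := by
      rw [Real.mul_rpow (Real.sqrt_nonneg _) (norm_nonneg _)]
      congr 1
      rw [show (2:ℝ) = ((2:ℕ):ℝ) by norm_num, Real.rpow_natCast]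
      exact Real.sq_sqrt hM0
    simpa [h2] using h1
  refine ⟨L.mkContinuous (Real.sqrt M) hbound, ?_, ?_⟩
  · intro h p hp
    show Tfun Δ φ ρ h p = _
    rw [Tfun, if_pos hp]
  · intro h p hp
    show Tfun Δ φ ρ h p = 0
    rw [Tfun, if_neg hp]

lemma regular_unique {Δ : Set X} {φ : X → X} {ρ : X → ℝ}
    {T T' : lp (fun _ : X × ℤ => ℂ) 2 →L[ℂ] lp (fun _ : X × ℤ => ℂ) 2}
    (hT : IsRegularOperator Δ φ ρ T) (hT' : IsRegularOperator Δ φ ρ T') : T = T' := by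
  ext h p
  by_cases hp : p.1 ∈ Δ
  · rw [hT.1 h p hp, hT'.1 h p hp]
  · rw [hT.2 h p hp, hT'.2 h p hp]

end RegRepAux

namespace RegRepAux

lemma mem_Dn_succ {Δ : Set X} {φ : X → X} {k : ℕ} {x : X} :
    x ∈ Dn Δ φ (k+1) ↔ x ∈ Δ ∧ φ x ∈ Dn Δ φ k := by
  constructor
  · intro h
    refine ⟨by simpa using h 0 (Nat.succ_pos k), fun j hj => ?_⟩
    have := h (j+1) (by omega)
    rwa [Function.iterate_succ_apply] at this
  · rintro ⟨h0, h1⟩ j hj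
    cases j with
    | zero => simpa using h0
    | succ j =>
      rw [Function.iterate_succ_apply]
      exact h1 j (by omega)

lemma rhon_succ {φ : X → X} {ρ : X → ℝ} (k : ℕ) (x : X) :
    rhon φ ρ (k+1) x = ρ x * rhon φ ρ k (φ x) := by
  rw [rhon, rhon, Finset.prod_range_succ']
  simp only [Function.iterate_succ_apply, Function.iterate_zero_apply]
  ring

lemma rhon_nonneg {Δ : Set X} {φ : X → X} {ρ : X → ℝ}
    (hρ0 : ∀ x ∈ Δ, 0 ≤ ρ x) {k : ℕ} {x : X} (hx : x ∈ Dn Δ φ k) :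
    0 ≤ rhon φ ρ k x :=
  Finset.prod_nonneg fun i hi => hρ0 _ (hx i (Finset.mem_range.mp hi))

variable [DecidableEq X]

lemma apply_eq_inner_single (f : lp (fun _ : X × ℤ => ℂ) 2) (p : X × ℤ) :
    (inner ℂ (lp.single 2 p (1:ℂ)) f : ℂ) = f p := by
  rw [lp.inner_single_left]
  simp [RCLike.inner_apply]

open Classical in
lemma star_single {Δ : Set X} {φ : X → X} {ρ : X → ℝ}
    {T : lp (fun _ : X × ℤ => ℂ) 2 →L[ℂ] lp (fun _ : X × ℤ => ℂ) 2}
    (hT : IsRegularOperator Δ φ ρ T) (x : X) (n : ℤ) :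
    star T (lp.single 2 (x, n) (1:ℂ)) =
      if x ∈ Δ then (Real.sqrt (ρ x) : ℂ) • lp.single 2 (φ x, n - 1) (1:ℂ) else 0 := by
  classical
  apply lp.ext
  funext p
  have lhs : (star T (lp.single 2 (x, n) (1:ℂ)) : ∀ _, ℂ) p
      = (starRingEnd ℂ) (T (lp.single 2 p (1:ℂ)) (x, n)) := by
    rw [← apply_eq_inner_single, ContinuousLinearMap.star_eq_adjoint,
      ContinuousLinearMap.adjoint_inner_right, lp.inner_single_right]
    simp [RCLike.inner_apply]
  rw [lhs]
  by_cases hx : x ∈ Δ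
  · rw [hT.1 _ _ hx, if_pos hx, lp.coeFn_smul, Pi.smul_apply, smul_eq_mul]
    by_cases hpq : p = (φ x, n - 1)
    · subst hpq
      simp [lp.single_apply_self, Complex.conj_ofReal]
    · rw [lp.single_apply_ne 2 _ _ (Ne.symm hpq), lp.single_apply_ne 2 _ _ hpq]
      simp
  · rw [hT.2 _ _ hx, if_neg hx]
    simp

open Classical in
lemma star_pow_single {Δ : Set X} {φ : X → X} {ρ : X → ℝ}
    {T : lp (fun _ : X × ℤ => ℂ) 2 →L[ℂ] lp (fun _ : X × ℤ => ℂ) 2}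
    (hT : IsRegularOperator Δ φ ρ T) (hρ0 : ∀ x ∈ Δ, 0 ≤ ρ x)
    (k : ℕ) (x : X) (n : ℤ) :
    ((star T) ^ k) (lp.single 2 (x, n) (1:ℂ)) =
      if x ∈ Dn Δ φ k then
        (Real.sqrt (rhon φ ρ k x) : ℂ) • lp.single 2 (φ^[k] x, n - (k:ℤ)) (1:ℂ)
      else 0 := by
  induction k generalizing x n with
  | zero =>
    rw [pow_zero,
      if_pos (show x ∈ Dn Δ φ 0 from fun j hj => absurd hj (by omega))]
    simp [rhon, ContinuousLinearMap.one_apply]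
  | succ k ih =>
    rw [pow_succ, ContinuousLinearMap.mul_apply, star_single hT x n]
    by_cases hx : x ∈ Δ
    · rw [if_pos hx, map_smul, ih (φ x) (n - 1)]
      by_cases hx' : φ x ∈ Dn Δ φ k
      · rw [if_pos hx', if_pos (mem_Dn_succ.mpr ⟨hx, hx'⟩), smul_smul]
        have e1 : (Real.sqrt (ρ x) : ℂ) * (Real.sqrt (rhon φ ρ k (φ x)) : ℂ)
            = (Real.sqrt (rhon φ ρ (k+1) x) : ℂ) := by
          rw [← Complex.ofReal_mul, ← Real.sqrt_mul (hρ0 x hx), ← rhon_succ]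
        have e2 : n - 1 - (k:ℤ) = n - ((k+1 : ℕ) : ℤ) := by push_cast; ring
        rw [e1, e2, ← Function.iterate_succ_apply]
      · rw [if_neg hx', smul_zero, if_neg (fun hc => hx' (mem_Dn_succ.mp hc).2)]
    · rw [if_neg hx, map_zero, if_neg (fun hc => hx (mem_Dn_succ.mp hc).1)]

end RegRepAux

/-- The regular representation: existence and uniqueness of `T̃`, and the
diagonal matrix coefficients of `π̃(a) T̃ᵏ (T̃*)ˡ π̃(b)`. -/
theorem regular_representation_matrix_coefficients
    {X : Type*} [TopologicalSpace X] [LocallyCompactSpace X] [T2Space X] [DecidableEq X]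
    (Δ : Set X) (φ : X → X) (ρ : X → ℝ) (M : ℝ)
    (hΔ : IsOpen Δ) (hφ : ContinuousOn φ Δ)
    (hcount : ∀ y : X, (Fiber Δ φ y).Countable)
    (hpot : IsPotential Δ φ ρ M)
    (πt : C₀(X, ℂ) →⋆ₙₐ[ℂ] (lp (fun _ : X × ℤ => ℂ) 2 →L[ℂ] lp (fun _ : X × ℤ => ℂ) 2))
    (hπt : ∀ (a : C₀(X, ℂ)) (h : lp (fun _ : X × ℤ => ℂ) 2) (p : X × ℤ),
      πt a h p = a p.1 * h p) :
    -- (i)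
    (∃! T : lp (fun _ : X × ℤ => ℂ) 2 →L[ℂ] lp (fun _ : X × ℤ => ℂ) 2,
      IsRegularOperator Δ φ ρ T) ∧
    -- (ii)
    (∀ T : lp (fun _ : X × ℤ => ℂ) 2 →L[ℂ] lp (fun _ : X × ℤ => ℂ) 2,
      IsRegularOperator Δ φ ρ T →
      ∀ (k l : ℕ) (a b : C₀(X, ℂ)),
        (∀ x ∉ Dn Δ φ k, a x = 0) → (∀ x ∉ Dn Δ φ l, b x = 0) →
        ∀ (x : X) (n : ℤ),
          (k ≠ l →
            (inner ℂ (lp.single 2 (x, n) (1 : ℂ))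
              ((πt a * T ^ k * (star T) ^ l * πt b) (lp.single 2 (x, n) (1 : ℂ))) : ℂ)
              = 0) ∧
          (k = l →
            ((x ∈ Dn Δ φ k →
              (inner ℂ (lp.single 2 (x, n) (1 : ℂ))
                ((πt a * T ^ k * (star T) ^ l * πt b) (lp.single 2 (x, n) (1 : ℂ))) : ℂ)
                = a x * b x * (rhon φ ρ k x : ℂ)) ∧
             (x ∉ Dn Δ φ k →
              (inner ℂ (lp.single 2 (x, n) (1 : ℂ))
                ((πt a * T ^ k * (star T) ^ l * πt b) (lp.single 2 (x, n) (1 : ℂ))) : ℂ)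
                = 0)))) := by
  classical
  obtain ⟨hρ0, hsum, hMb, -⟩ := hpot
  constructor
  · obtain ⟨T, hT⟩ := RegRepAux.exists_regular hρ0 hsum hMb
    exact ⟨T, hT, fun T' hT' => RegRepAux.regular_unique hT' hT⟩
  · intro T hT k l a b ha hb x n
    have hπb : πt b (lp.single 2 (x, n) (1:ℂ)) = b x • lp.single 2 (x, n) (1:ℂ) := by
      apply lp.ext
      funext p
      rw [hπt, lp.coeFn_smul, Pi.smul_apply, smul_eq_mul]
      by_cases hp : p = (x, n)
      · subst hp; rfl
      · rw [lp.single_apply_ne 2 _ _ hp]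
        ring
    have expand : (πt a * T ^ k * (star T) ^ l * πt b) (lp.single 2 (x,n) (1:ℂ))
        = πt a ((T ^ k) (((star T) ^ l) (πt b (lp.single 2 (x,n) (1:ℂ))))) := rfl
    have hadj : ∀ u : lp (fun _ : X × ℤ => ℂ) 2,
        ((T ^ k) u : ∀ _, ℂ) (x, n)
          = inner ℂ (((star T) ^ k) (lp.single 2 (x,n) (1:ℂ))) u := by
      intro u
      rw [← star_pow, ContinuousLinearMap.star_eq_adjoint,
        ContinuousLinearMap.adjoint_inner_left]
      exact (RegRepAux.apply_eq_inner_single _ _).symm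
    have main : (inner ℂ (lp.single 2 (x,n) (1:ℂ))
        ((πt a * T ^ k * (star T) ^ l * πt b) (lp.single 2 (x,n) (1:ℂ))) : ℂ)
        = a x * (b x * (inner ℂ (((star T) ^ k) (lp.single 2 (x,n) (1:ℂ)))
            (((star T) ^ l) (lp.single 2 (x,n) (1:ℂ))) : ℂ)) := by
      rw [expand, RegRepAux.apply_eq_inner_single, hπt, hadj, hπb, map_smul,
        inner_smul_right]
    have hI : (inner ℂ (((star T) ^ k) (lp.single 2 (x,n) (1:ℂ)))
          (((star T) ^ l) (lp.single 2 (x,n) (1:ℂ))) : ℂ)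
        = if x ∈ Dn Δ φ k ∧ x ∈ Dn Δ φ l ∧ k = l then (rhon φ ρ k x : ℂ) else 0 := by
      rw [RegRepAux.star_pow_single hT hρ0 k x n, RegRepAux.star_pow_single hT hρ0 l x n]
      by_cases hxk : x ∈ Dn Δ φ k
      · by_cases hxl : x ∈ Dn Δ φ l
        · rw [if_pos hxk, if_pos hxl, inner_smul_left, inner_smul_right,
            lp.inner_single_left]
          by_cases hkl : k = l
          · subst hkl
            rw [if_pos ⟨hxk, hxl, rfl⟩, lp.single_apply_self]
            simp [RCLike.inner_apply, Complex.conj_ofReal, ← Complex.ofReal_mul,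
              Real.mul_self_sqrt (RegRepAux.rhon_nonneg hρ0 hxk)]
          · have hne : ((φ^[k] x, n - (k:ℤ)) : X × ℤ) ≠ (φ^[l] x, n - (l:ℤ)) := by
              intro hc
              have h2 := congrArg Prod.snd hc
              simp only at h2
              omega
            rw [lp.single_apply_ne 2 _ _ hne, if_neg (by tauto)]
            simp
        · rw [if_pos hxk, if_neg hxl, inner_zero_right, if_neg (by tauto)]
      · rw [if_neg hxk, inner_zero_left, if_neg (by tauto)]
    refine ⟨fun hkl => ?_, fun hkl => ⟨fun hxk => ?_, fun hxk => ?_⟩⟩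
    · rw [main, hI, if_neg (by tauto)]
      ring
    · subst hkl
      rw [main, hI, if_pos ⟨hxk, hxk, rfl⟩]
      ring
    · subst hkl
      rw [main, hI, if_neg (by tauto)]
      ring
end
end

section
/- Let X be a locally compact Hausdorff space, Δ ⊆ X open, and φ : Δ → X a local homeomorphism, i.e. every x ∈ Δ has an open neighbourhood U ⊆ Δ such that φ(U) is open in X and φ restricted to U is a homeomorphism onto φ(U). Let ρ : Δ → [0,∞) be continuous with M := sup_{y∈X} Σ_{x∈φ⁻¹(y)} ρ(x) < ∞. Then for every a ∈ C₀(Δ) the function L(a) : y ↦ Σ_{x∈φ⁻¹(y)} ρ(x)a(x) belongs to C₀(X), satisfies ‖L(a)‖_∞ ≤ M‖a‖_∞, L(a) ≥ 0 whenever a ≥ 0, and L((b∘φ)·a) = b·L(a) for every b ∈ C₀(X), where (b∘φ)·a denotes the element of C₀(Δ) equal to b(φ(x))a(x) on Δ and 0 elsewhere. -/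
open scoped ZeroAtInfty

noncomputable section

variable {X : Type*} [TopologicalSpace X]

open Set Filter Topology

/-- Evaluation is dominated by the norm in `C₀`. -/
lemma C0_norm_apply_le (f : C₀(X, ℂ)) (y : X) : ‖f y‖ ≤ ‖f‖ := by
  rw [← ZeroAtInftyContinuousMap.norm_toBCF_eq_norm]
  exact f.toBCF.norm_coe_le_norm y

/-- The intersection of a fibre of a local injection with a compact subset of `Δ` is finite. -/
lemma fiber_inter_finite [T2Space X] {Δ : Set X} {φ : X → X}
    (hφ : ContinuousOn φ Δ)
    (hloc : ∀ x ∈ Δ, ∃ U : Set X, IsOpen U ∧ x ∈ U ∧ U ⊆ Δ ∧ Set.InjOn φ U ∧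
      ∀ V ⊆ U, IsOpen V → IsOpen (φ '' V))
    {K : Set X} (hK : IsCompact K) (hKΔ : K ⊆ Δ) (y : X) :
    (Fiber Δ φ y ∩ K).Finite := by
  have hSK : Fiber Δ φ y ∩ K = K ∩ φ ⁻¹' {y} := by
    ext x
    constructor
    · rintro ⟨⟨hxΔ, hxy⟩, hxK⟩; exact ⟨hxK, by simpa using hxy⟩
    · rintro ⟨hxK, hxy⟩; exact ⟨⟨hKΔ hxK, by simpa using hxy⟩, hxK⟩
  have hScl : IsClosed (K ∩ φ ⁻¹' {y}) :=
    ContinuousOn.preimage_isClosed_of_isClosed (hφ.mono hKΔ) hK.isClosed isClosed_singleton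
  have hScpt : IsCompact (Fiber Δ φ y ∩ K) := by
    rw [hSK]; exact hK.of_isClosed_subset hScl inter_subset_left
  have hcov : ∀ x ∈ Fiber Δ φ y ∩ K, ∃ U : Set X, IsOpen U ∧ x ∈ U ∧ Set.InjOn φ U := by
    intro x hx
    obtain ⟨U, hU, hxU, _, hinj, _⟩ := hloc x hx.1.1
    exact ⟨U, hU, hxU, hinj⟩
  choose! U hUopen hUmem hUinj using hcov
  obtain ⟨t, htS, htfin, hcover⟩ := hScpt.elim_finite_subcover_image
    (fun x hx => hUopen x hx) (fun x hx => mem_biUnion hx (hUmem x hx))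
  refine htfin.subset ?_
  intro z hz
  obtain ⟨x, hxt, hzU⟩ := by simpa using hcover hz
  have hxS : x ∈ Fiber Δ φ y ∩ K := htS hxt
  have : z = x := hUinj x hxS hzU (hUmem x hxS) (by rw [hz.1.2, hxS.1.2])
  rwa [this]

/-- The transfer operator of a compactly supported function (with support inside `Δ`)
is a continuous function vanishing at infinity. -/
lemma transfer_compactSupport [LocallyCompactSpace X] [T2Space X]
    (Δ : Set X) (φ : X → X) (ρ : X → ℝ)
    (hφ : ContinuousOn φ Δ)
    (hloc : ∀ x ∈ Δ, ∃ U : Set X, IsOpen U ∧ x ∈ U ∧ U ⊆ Δ ∧ Set.InjOn φ U ∧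
      ∀ V ⊆ U, IsOpen V → IsOpen (φ '' V))
    (hρcont : ContinuousOn ρ Δ)
    (f : X → ℂ) (hf : Continuous f) (hfc : IsCompact (tsupport f))
    (hfΔ : tsupport f ⊆ Δ) :
    ∃ b : C₀(X, ℂ), ∀ y : X, b y = ∑' x : Fiber Δ φ y, (ρ x.1 : ℂ) * f x.1 := by
  classical
  set g : X → ℂ := fun y => ∑' x : Fiber Δ φ y, (ρ x.1 : ℂ) * f x.1 with hg
  have hsupp : ∀ y ∉ φ '' tsupport f, g y = 0 := by
    intro y hy
    have h0 : ∀ x : Fiber Δ φ y, (ρ x.1 : ℂ) * f x.1 = 0 := by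
      intro x
      by_contra h
      have hfx : f x.1 ≠ 0 := fun h0 => h (by simp [h0])
      have hxm : x.1 ∈ tsupport f := subset_tsupport f hfx
      exact hy ⟨x.1, hxm, x.2.2⟩
    have : ∑' x : Fiber Δ φ y, (ρ x.1 : ℂ) * f x.1 = ∑' x : Fiber Δ φ y, (0 : ℂ) := tsum_congr h0
    simpa [hg] using this
  have hcont : Continuous g := by
    rw [continuous_iff_continuousAt]
    intro y
    haveI : Nonempty X := ⟨y⟩
    set K := tsupport f with hK
    have hSfin : (Fiber Δ φ y ∩ K).Finite := fiber_inter_finite hφ hloc hfc hfΔ y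
    set S := Fiber Δ φ y ∩ K with hSdef
    haveI : Fintype ↥S := hSfin.fintype
    obtain ⟨W, hW, hWdisj⟩ := hSfin.t2_separation
    have hchart : ∀ x : S, ∃ U : Set X, IsOpen U ∧ x.1 ∈ U ∧ U ⊆ Δ ∧ Set.InjOn φ U ∧
        ∀ V ⊆ U, IsOpen V → IsOpen (φ '' V) := fun x => hloc x.1 x.2.1.1
    choose U hUopen hUmem hUΔ hUinj hUimg using hchart
    set V : S → Set X := fun x => U x ∩ W x.1 with hVdef
    have hVopen : ∀ x, IsOpen (V x) := fun x => (hUopen x).inter (hW x.1).2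
    have hVmem : ∀ x : S, x.1 ∈ V x := fun x => ⟨hUmem x, (hW x.1).1⟩
    have hVΔ : ∀ x, V x ⊆ Δ := fun x => inter_subset_left.trans (hUΔ x)
    have hVinj : ∀ x, Set.InjOn φ (V x) := fun x => (hUinj x).mono inter_subset_left
    have hVimg : ∀ x, IsOpen (φ '' V x) := fun x => hUimg x (V x) inter_subset_left (hVopen x)
    have hVdisj : ∀ x x' : S, x ≠ x' → V x ∩ V x' = ∅ := by
      intro x x' hne
      have hd : Disjoint (W x.1) (W x'.1) :=
        hWdisj x.2 x'.2 (fun h => hne (Subtype.ext h))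
      exact Set.disjoint_iff_inter_eq_empty.mp
        (hd.mono inter_subset_right inter_subset_right)
    set K' := K \ ⋃ x : S, V x with hK'def
    have hK'cpt : IsCompact K' := hfc.diff (isOpen_iUnion hVopen)
    have hK'img : IsCompact (φ '' K') :=
      hK'cpt.image_of_continuousOn (hφ.mono (diff_subset.trans hfΔ))
    have hyK' : y ∉ φ '' K' := by
      rintro ⟨x, hxK', hxy⟩
      have hxS : x ∈ S := ⟨⟨hfΔ hxK'.1, hxy⟩, hxK'.1⟩
      exact hxK'.2 (mem_iUnion.mpr ⟨⟨x, hxS⟩, hVmem ⟨x, hxS⟩⟩)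
    set Wm := (⋂ x : S, φ '' V x) ∩ (φ '' K')ᶜ with hWm
    have hWmopen : IsOpen Wm :=
      (isOpen_iInter_of_finite fun x => hVimg x).inter hK'img.isClosed.isOpen_compl
    have hyWm : y ∈ Wm := ⟨mem_iInter.mpr fun x => ⟨x.1, hVmem x, x.2.1.2⟩, hyK'⟩
    set ψ : S → X → X := fun x => Function.invFunOn φ (V x) with hψ
    have hψ_spec : ∀ (x : S) (y' : X), y' ∈ φ '' V x → ψ x y' ∈ V x ∧ φ (ψ x y') = y' := by
      rintro x y' ⟨z, hz, hzy⟩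
      exact ⟨Function.invFunOn_mem ⟨z, hz, hzy⟩, Function.invFunOn_eq ⟨z, hz, hzy⟩⟩
    have hψcont : ∀ x : S, ContinuousOn (ψ x) (φ '' V x) := by
      intro x
      rw [continuousOn_open_iff (hVimg x)]
      intro t ht
      have heq : φ '' V x ∩ ψ x ⁻¹' t = φ '' (V x ∩ t) := by
        ext y'
        constructor
        · rintro ⟨hy', hmem⟩
          obtain ⟨hmemV, heq⟩ := hψ_spec x y' hy'
          exact ⟨ψ x y', ⟨hmemV, hmem⟩, heq⟩
        · rintro ⟨z, ⟨hzV, hzt⟩, rfl⟩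
          have h1 : φ z ∈ φ '' V x := ⟨z, hzV, rfl⟩
          obtain ⟨hmemV, heq⟩ := hψ_spec x (φ z) h1
          have h2 : ψ x (φ z) = z := hVinj x hmemV hzV heq
          exact ⟨h1, by rw [Set.mem_preimage, h2]; exact hzt⟩
      rw [heq]
      exact hUimg x _ (inter_subset_left.trans inter_subset_left) ((hVopen x).inter ht)
    set G : X → ℂ := fun y' => ∑ x : S, (ρ (ψ x y') : ℂ) * f (ψ x y') with hG
    have hWmsub : ∀ x : S, Wm ⊆ φ '' V x := fun x y' hy' => (mem_iInter.mp hy'.1) x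
    have hlocal : ∀ y' ∈ Wm, g y' = G y' := by
      intro y' hy'
      have hy'img : ∀ x : S, y' ∈ φ '' V x := fun x => hWmsub x hy'
      have hmemFib : ∀ x : S, ψ x y' ∈ Fiber Δ φ y' := fun x =>
        ⟨hVΔ x (hψ_spec x y' (hy'img x)).1, (hψ_spec x y' (hy'img x)).2⟩
      set s : Finset ↥(Fiber Δ φ y') :=
        Finset.univ.image (fun x : S => (⟨ψ x y', hmemFib x⟩ : ↥(Fiber Δ φ y'))) with hs
      have hzero : ∀ z : ↥(Fiber Δ φ y'), z ∉ s → (ρ z.1 : ℂ) * f z.1 = 0 := by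
        intro z hz
        by_contra h
        have hfz : f z.1 ≠ 0 := fun h0 => h (by simp [h0])
        have hzK : z.1 ∈ K := subset_tsupport f hfz
        have hzK' : z.1 ∉ K' := fun hzK' => hy'.2 ⟨z.1, hzK', z.2.2⟩
        have hzU : z.1 ∈ ⋃ x : S, V x := by
          by_contra h2
          exact hzK' ⟨hzK, h2⟩
        obtain ⟨x, hx⟩ := mem_iUnion.mp hzU
        have hx2 : ψ x y' = z.1 := hVinj x (hψ_spec x y' (hy'img x)).1 hx
          (by rw [(hψ_spec x y' (hy'img x)).2, z.2.2])
        exact hz (Finset.mem_image.mpr ⟨x, Finset.mem_univ x, Subtype.ext hx2⟩)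
      have h1 : g y' = ∑ z ∈ s, (ρ z.1 : ℂ) * f z.1 := tsum_eq_sum hzero
      have hinj : ∀ x ∈ (Finset.univ : Finset ↥S), ∀ x' ∈ (Finset.univ : Finset ↥S),
          (⟨ψ x y', hmemFib x⟩ : ↥(Fiber Δ φ y')) = ⟨ψ x' y', hmemFib x'⟩ → x = x' := by
        intro x _ x' _ heq
        by_contra hne
        have h3 : ψ x y' ∈ V x := (hψ_spec x y' (hy'img x)).1
        have h4 : ψ x' y' ∈ V x' := (hψ_spec x' y' (hy'img x')).1
        have h5 : ψ x y' = ψ x' y' := congrArg Subtype.val heq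
        have : ψ x y' ∈ V x ∩ V x' := ⟨h3, h5 ▸ h4⟩
        rw [hVdisj x x' hne] at this
        exact this
      rw [h1, hs, Finset.sum_image hinj]
    have hWnhds : Wm ∈ 𝓝 y := hWmopen.mem_nhds hyWm
    have hGcont : ContinuousOn G Wm := by
      apply continuousOn_finset_sum
      intro x _
      have hψ' : ContinuousOn (ψ x) Wm := (hψcont x).mono (hWmsub x)
      have hmaps : Set.MapsTo (ψ x) Wm Δ := fun y' hy' =>
        hVΔ x (hψ_spec x y' (hWmsub x hy')).1
      have hρψ : ContinuousOn (fun y' => ρ (ψ x y')) Wm := hρcont.comp hψ' hmaps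
      have hfψ : ContinuousOn (fun y' => f (ψ x y')) Wm := hf.comp_continuousOn hψ'
      exact (Complex.continuous_ofReal.comp_continuousOn hρψ).mul hfψ
    have hGc : ContinuousAt G y := hGcont.continuousAt hWnhds
    apply hGc.congr
    filter_upwards [hWnhds] with y' hy'
    exact (hlocal y' hy').symm
  refine ⟨⟨⟨g, hcont⟩, ?_⟩, fun y => rfl⟩
  have himg : IsCompact (φ '' tsupport f) := hfc.image_of_continuousOn (hφ.mono hfΔ)
  have hev : ∀ᶠ y in Filter.cocompact X, g y = 0 := by
    rw [Filter.eventually_iff, Filter.mem_cocompact]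
    exact ⟨φ '' tsupport f, himg, fun y hy => hsupp y hy⟩
  exact Filter.Tendsto.congr' (hev.mono fun y h => h.symm) tendsto_const_nhds

/-- Approximation of elements of `C₀(Δ)` by compactly supported functions. -/
lemma exists_compact_approx [LocallyCompactSpace X] [T2Space X]
    {Δ : Set X} (hΔ : IsOpen Δ) (a : C₀(X, ℂ)) (ha : ∀ x ∉ Δ, a x = 0)
    {ε : ℝ} (hε : 0 < ε) :
    ∃ f : X → ℂ, Continuous f ∧ IsCompact (tsupport f) ∧ tsupport f ⊆ Δ ∧
      ∀ x, ‖a x - f x‖ ≤ ε := by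
  set K := {x : X | ε ≤ ‖a x‖} with hKdef
  have hKcl : IsClosed K := isClosed_le continuous_const a.continuous.norm
  have hev : ∀ᶠ x in cocompact X, ‖a x‖ < ε := by
    have h2 := Metric.tendsto_nhds.mp a.zero_at_infty' ε hε
    simpa [dist_zero_right] using h2
  obtain ⟨C, hC, hCsub⟩ := Filter.mem_cocompact.mp hev
  have hKC : K ⊆ C := by
    intro x hx
    by_contra h
    have h2 := hCsub h
    simp only [hKdef, Set.mem_setOf_eq] at h2 hx
    linarith
  have hKcpt : IsCompact K := hC.of_isClosed_subset hKcl hKC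
  have hKΔ : K ⊆ Δ := by
    intro x hx
    by_contra h
    rw [hKdef] at hx
    simp only [Set.mem_setOf_eq, ha x h, norm_zero] at hx
    linarith
  obtain ⟨k, kcpt, kcl, hKik, hkΔ⟩ := exists_compact_closed_between hKcpt hΔ hKΔ
  have hdisj : Disjoint K (interior k)ᶜ := disjoint_compl_right_iff_subset.mpr hKik
  obtain ⟨h, h1, h0, -, hbd⟩ := exists_continuous_one_zero_of_isCompact hKcpt
    isOpen_interior.isClosed_compl hdisj
  have hsub : tsupport (fun x => (h x : ℂ) * a x) ⊆ k := by
    apply closure_minimal ?_ kcl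
    intro x hx
    by_contra hxk
    have hxint : x ∉ interior k := fun hxi => hxk (interior_subset hxi)
    have h00 : h x = 0 := h0 hxint
    simp only [Function.mem_support, ne_eq] at hx
    exact hx (by simp [h00])
  refine ⟨fun x => (h x : ℂ) * a x,
    (Complex.continuous_ofReal.comp h.continuous).mul a.continuous,
    kcpt.of_isClosed_subset (isClosed_tsupport _) hsub, hsub.trans hkΔ, ?_⟩
  · intro x
    by_cases hx : x ∈ K
    · have h1x : h x = 1 := h1 hx
      simp only [h1x, Complex.ofReal_one, one_mul, sub_self, norm_zero]
      exact hε.le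
    · have hax : ‖a x‖ ≤ ε := le_of_lt (not_le.mp hx)
      have heq : a x - (h x : ℂ) * a x = ((1 - h x : ℝ) : ℂ) * a x := by
        push_cast; ring
      rw [heq, norm_mul, Complex.norm_real, Real.norm_eq_abs]
      have h01 := hbd x
      have habs : |1 - h x| ≤ 1 := by
        rw [abs_le]; constructor <;> [linarith [h01.2]; linarith [h01.1]]
      calc |1 - h x| * ‖a x‖ ≤ 1 * ‖a x‖ :=
            mul_le_mul_of_nonneg_right habs (norm_nonneg _)
        _ ≤ ε := by rw [one_mul]; exact hax

/-- Summability and norm bound for fibre sums against a bounded function. -/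
lemma fiber_sum_bound {Δ : Set X} {φ : X → X} {ρ : X → ℝ}
    (hρ0 : ∀ x ∈ Δ, 0 ≤ ρ x) (y : X)
    (hsum : Summable fun x : Fiber Δ φ y => ρ x.1)
    (u : X → ℂ) (C : ℝ) (hu : ∀ x ∈ Δ, ‖u x‖ ≤ C) :
    Summable (fun x : Fiber Δ φ y => (ρ x.1 : ℂ) * u x.1) ∧
    ‖∑' x : Fiber Δ φ y, (ρ x.1 : ℂ) * u x.1‖ ≤ (∑' x : Fiber Δ φ y, ρ x.1) * C := by
  have hnorm : ∀ x : Fiber Δ φ y, ‖(ρ x.1 : ℂ) * u x.1‖ ≤ ρ x.1 * C := by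
    intro x
    rw [norm_mul, Complex.norm_real, Real.norm_eq_abs, abs_of_nonneg (hρ0 x.1 x.2.1)]
    exact mul_le_mul_of_nonneg_left (hu x.1 x.2.1) (hρ0 x.1 x.2.1)
  have hsnorm : Summable (fun x : Fiber Δ φ y => ‖(ρ x.1 : ℂ) * u x.1‖) :=
    Summable.of_nonneg_of_le (fun x => norm_nonneg _) hnorm (hsum.mul_right C)
  refine ⟨hsnorm.of_norm, ?_⟩
  calc ‖∑' x : Fiber Δ φ y, (ρ x.1 : ℂ) * u x.1‖
      ≤ ∑' x : Fiber Δ φ y, ‖(ρ x.1 : ℂ) * u x.1‖ := norm_tsum_le_tsum_norm hsnorm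
    _ ≤ ∑' x : Fiber Δ φ y, ρ x.1 * C := Summable.tsum_le_tsum hnorm hsnorm (hsum.mul_right C)
    _ = (∑' x : Fiber Δ φ y, ρ x.1) * C := tsum_mul_right

set_option maxHeartbeats 2000000 in
/-- If `φ : Δ → X` is a local homeomorphism and `ρ : Δ → [0,∞)` is continuous
with `sup_y Σ_{x ∈ φ⁻¹(y)} ρ(x) ≤ M < ∞`, then `L(a)(y) = Σ_{x ∈ φ⁻¹(y)} ρ(x)a(x)` defines a
bounded positive transfer operator `L : C₀(Δ) → C₀(X)` for `φ`. -/
theorem localHomeo_transfer_operator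
    {X : Type*} [TopologicalSpace X] [LocallyCompactSpace X] [T2Space X]
    (Δ : Set X) (φ : X → X) (ρ : X → ℝ) (M : ℝ)
    (hΔ : IsOpen Δ) (hφ : ContinuousOn φ Δ)
    (hloc : ∀ x ∈ Δ, ∃ U : Set X, IsOpen U ∧ x ∈ U ∧ U ⊆ Δ ∧ Set.InjOn φ U ∧
      ∀ V ⊆ U, IsOpen V → IsOpen (φ '' V))
    (hρcont : ContinuousOn ρ Δ) (hρ0 : ∀ x ∈ Δ, 0 ≤ ρ x)
    (hsum : ∀ y : X, Summable fun x : Fiber Δ φ y => ρ x.1)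
    (hM : ∀ y : X, (∑' x : Fiber Δ φ y, ρ x.1) ≤ M) :
    ∀ a : C₀(X, ℂ), (∀ x ∉ Δ, a x = 0) →
      (∀ y : X, Summable fun x : Fiber Δ φ y => (ρ x.1 : ℂ) * a x.1) ∧
      ∃ b : C₀(X, ℂ),
        (∀ y : X, b y = ∑' x : Fiber Δ φ y, (ρ x.1 : ℂ) * a x.1) ∧
        ‖b‖ ≤ M * ‖a‖ ∧
        ((∀ x : X, (a x).im = 0 ∧ 0 ≤ (a x).re) →
          ∀ y : X, (b y).im = 0 ∧ 0 ≤ (b y).re) ∧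
        ∀ c : C₀(X, ℂ), ∃ d : C₀(X, ℂ),
          (∀ x ∈ Δ, d x = c (φ x) * a x) ∧ (∀ x ∉ Δ, d x = 0) ∧
          ∀ y : X, (∑' x : Fiber Δ φ y, (ρ x.1 : ℂ) * d x.1) = c y * b y := by
  intro a ha
  classical
  rcases isEmpty_or_nonempty X with hX | hX
  · refine ⟨fun y => isEmptyElim y, 0, fun y => isEmptyElim y, ?_, fun _ y => isEmptyElim y, ?_⟩
    · have h0 : a = 0 := by ext x; exact isEmptyElim x
      simp [h0]
    · intro c
      exact ⟨0, fun x hx => absurd trivial (isEmptyElim x),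
        fun x hx => absurd trivial (isEmptyElim x), fun y => isEmptyElim y⟩
  have hM0 : 0 ≤ M := by
    obtain ⟨y⟩ := hX
    have h1 : 0 ≤ ∑' x : Fiber Δ φ y, ρ x.1 := tsum_nonneg fun x => hρ0 x.1 x.2.1
    exact le_trans h1 (hM y)
  have haC : ∀ x ∈ Δ, ‖a x‖ ≤ ‖a‖ := fun x _ => C0_norm_apply_le a x
  have hsummA : ∀ y, Summable (fun x : Fiber Δ φ y => (ρ x.1 : ℂ) * a x.1) :=
    fun y => (fiber_sum_bound hρ0 y (hsum y) a ‖a‖ haC).1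
  set g : X → ℂ := fun y => ∑' x : Fiber Δ φ y, (ρ x.1 : ℂ) * a x.1 with hgdef
  have happrox : ∀ n : ℕ, ∃ f : X → ℂ, Continuous f ∧ IsCompact (tsupport f) ∧
      tsupport f ⊆ Δ ∧ ∀ x, ‖a x - f x‖ ≤ 1 / (n + 1) :=
    fun n => exists_compact_approx hΔ a ha (by positivity)
  choose F hFc hFcpt hFΔ hFa using happrox
  have hB : ∀ n : ℕ, ∃ b : C₀(X, ℂ), ∀ y : X,
      b y = ∑' x : Fiber Δ φ y, (ρ x.1 : ℂ) * F n x.1 :=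
    fun n => transfer_compactSupport Δ φ ρ hφ hloc hρcont (F n) (hFc n) (hFcpt n) (hFΔ n)
  choose B hBspec using hB
  have hFsum : ∀ (n : ℕ) (y : X), Summable (fun x : Fiber Δ φ y => (ρ x.1 : ℂ) * F n x.1) := by
    intro n y
    have hFb : ∀ x ∈ Δ, ‖F n x‖ ≤ ‖a‖ + 1 / (n + 1) := by
      intro x hx
      calc ‖F n x‖ = ‖a x - (a x - F n x)‖ := by congr 1; ring
        _ ≤ ‖a x‖ + ‖a x - F n x‖ := norm_sub_le _ _
        _ ≤ ‖a‖ + 1 / (n + 1) := add_le_add (C0_norm_apply_le a x) (hFa n x)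
    exact (fiber_sum_bound hρ0 y (hsum y) (F n) (‖a‖ + 1 / (n + 1)) hFb).1
  have hptw : ∀ (n : ℕ) (y : X), ‖B n y - g y‖ ≤ M * (1 / (n + 1)) := by
    intro n y
    have hdiff : B n y - g y = ∑' x : Fiber Δ φ y, (ρ x.1 : ℂ) * (F n x.1 - a x.1) := by
      rw [hBspec n y, hgdef, ← Summable.tsum_sub (hFsum n y) (hsummA y)]
      exact tsum_congr fun x => by ring
    rw [hdiff]
    have hb := (fiber_sum_bound hρ0 y (hsum y) (fun x => F n x - a x) (1 / (n + 1))
      (fun x _ => by rw [norm_sub_rev]; exact hFa n x)).2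
    calc ‖∑' x : Fiber Δ φ y, (ρ x.1 : ℂ) * (F n x.1 - a x.1)‖
        ≤ (∑' x : Fiber Δ φ y, ρ x.1) * (1 / (n + 1)) := hb
      _ ≤ M * (1 / (n + 1)) := mul_le_mul_of_nonneg_right (hM y) (by positivity)
  have hnormdiff : ∀ n m : ℕ, ‖B n - B m‖ ≤ M * (1 / (n + 1)) + M * (1 / (m + 1)) := by
    intro n m
    rw [← ZeroAtInftyContinuousMap.norm_toBCF_eq_norm]
    apply (BoundedContinuousFunction.norm_le
      (add_nonneg (mul_nonneg hM0 (by positivity)) (mul_nonneg hM0 (by positivity)))).mpr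
    intro y
    have heval : (B n - B m).toBCF y = B n y - B m y := rfl
    rw [heval]
    calc ‖B n y - B m y‖ = ‖(B n y - g y) - (B m y - g y)‖ := by congr 1; ring
      _ ≤ ‖B n y - g y‖ + ‖B m y - g y‖ := norm_sub_le _ _
      _ ≤ M * (1 / (n + 1)) + M * (1 / (m + 1)) := add_le_add (hptw n y) (hptw m y)
  have hone : ∀ n N : ℕ, N ≤ n → (1 : ℝ) / (n + 1) ≤ 1 / (N + 1) := by
    intro n N hn
    apply one_div_le_one_div_of_le (by positivity)
    have : (N : ℝ) ≤ n := Nat.cast_le.mpr hn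
    linarith
  have hcauchy : CauchySeq B := by
    refine cauchySeq_of_le_tendsto_0
      (fun N : ℕ => M * (1 / (N + 1)) + M * (1 / (N + 1))) ?_ ?_
    · intro n m N hn hm
      rw [dist_eq_norm]
      refine (hnormdiff n m).trans (add_le_add ?_ ?_)
      · exact mul_le_mul_of_nonneg_left (hone n N hn) hM0
      · exact mul_le_mul_of_nonneg_left (hone m N hm) hM0
    · have h1 : Filter.Tendsto (fun N : ℕ => 1 / ((N : ℝ) + 1)) Filter.atTop (𝓝 0) :=
        tendsto_one_div_add_atTop_nhds_zero_nat
      have h2 := (h1.const_mul M).add (h1.const_mul M)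
      simpa using h2
  obtain ⟨b, hb⟩ := cauchySeq_tendsto_of_complete hcauchy
  have hMn0 : Filter.Tendsto (fun n : ℕ => M * (1 / ((n : ℝ) + 1))) Filter.atTop (𝓝 0) := by
    have h1 : Filter.Tendsto (fun N : ℕ => 1 / ((N : ℝ) + 1)) Filter.atTop (𝓝 0) :=
      tendsto_one_div_add_atTop_nhds_zero_nat
    simpa using h1.const_mul M
  have hbg : ∀ y : X, b y = g y := by
    intro y
    have h1 : Filter.Tendsto (fun n => B n y - b y) Filter.atTop (𝓝 0) := by
      apply squeeze_zero_norm (fun n => ?_) (tendsto_iff_dist_tendsto_zero.mp hb)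
      have heval : B n y - b y = (B n - b) y := rfl
      rw [heval]
      exact (C0_norm_apply_le _ y).trans_eq (dist_eq_norm _ _).symm
    have h2 : Filter.Tendsto (fun n => B n y - g y) Filter.atTop (𝓝 0) :=
      squeeze_zero_norm (fun n => hptw n y) hMn0
    have h3 : Filter.Tendsto (fun _ : ℕ => b y - g y) Filter.atTop (𝓝 0) := by
      have := h2.sub h1
      simpa using this
    have h4 : b y - g y = 0 := tendsto_nhds_unique tendsto_const_nhds h3
    exact sub_eq_zero.mp h4
  refine ⟨hsummA, b, hbg, ?_, ?_, ?_⟩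
  · -- norm estimate
    rw [← ZeroAtInftyContinuousMap.norm_toBCF_eq_norm]
    apply (BoundedContinuousFunction.norm_le (mul_nonneg hM0 (norm_nonneg a))).mpr
    intro y
    show ‖b y‖ ≤ M * ‖a‖
    rw [hbg y]
    calc ‖g y‖ ≤ (∑' x : Fiber Δ φ y, ρ x.1) * ‖a‖ :=
          (fiber_sum_bound hρ0 y (hsum y) a ‖a‖ haC).2
      _ ≤ M * ‖a‖ := mul_le_mul_of_nonneg_right (hM y) (norm_nonneg a)
  · -- positivity
    intro hpos y
    have hhs : HasSum (fun x : Fiber Δ φ y => (ρ x.1 : ℂ) * a x.1) (b y) := by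
      rw [hbg y]; exact (hsummA y).hasSum
    obtain ⟨hre, him⟩ := (Complex.hasSum_iff _ _).mp hhs
    constructor
    · have heq : (fun x : Fiber Δ φ y => ((ρ x.1 : ℂ) * a x.1).im) =
          fun _ : Fiber Δ φ y => (0 : ℝ) := by
        funext x
        simp [Complex.mul_im, (hpos x.1).1]
      rw [heq] at him
      exact him.unique hasSum_zero
    · have heq : (fun x : Fiber Δ φ y => ((ρ x.1 : ℂ) * a x.1).re) =
          fun x : Fiber Δ φ y => ρ x.1 * (a x.1).re := by
        funext x
        simp [Complex.mul_re, (hpos x.1).1]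
      rw [heq] at hre
      refine hasSum_le ?_ hasSum_zero hre
      intro x
      exact mul_nonneg (hρ0 x.1 x.2.1) (hpos x.1).2
  · -- covariance
    intro c
    set d0 : X → ℂ := fun x => if x ∈ Δ then c (φ x) * a x else 0 with hd0
    have hd0norm : ∀ z, ‖d0 z‖ ≤ ‖c‖ * ‖a z‖ := by
      intro z
      by_cases hz : z ∈ Δ
      · simp only [hd0, if_pos hz, norm_mul]
        exact mul_le_mul_of_nonneg_right (C0_norm_apply_le c (φ z)) (norm_nonneg _)
      · simp only [hd0, if_neg hz, norm_zero]
        positivity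
    have hd0cont : Continuous d0 := by
      rw [continuous_iff_continuousAt]
      intro x
      by_cases hx : x ∈ Δ
      · have hca : ContinuousAt (fun z => c (φ z) * a z) x :=
          (c.continuous.continuousAt.comp (hφ.continuousAt (hΔ.mem_nhds hx))).mul
            a.continuous.continuousAt
        apply hca.congr
        filter_upwards [hΔ.mem_nhds hx] with z hz
        simp [hd0, if_pos hz]
      · have h0 : d0 x = 0 := if_neg hx
        unfold ContinuousAt
        rw [h0]
        apply squeeze_zero_norm hd0norm
        have ht : Filter.Tendsto (fun z => ‖c‖ * ‖a z‖) (𝓝 x) (𝓝 (‖c‖ * ‖a x‖)) :=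
          (continuous_const.mul a.continuous.norm).tendsto x
        rwa [ha x hx, norm_zero, mul_zero] at ht
    have hd0zero : Filter.Tendsto d0 (cocompact X) (𝓝 0) := by
      apply squeeze_zero_norm hd0norm
      have h2 := (a.zero_at_infty'.norm).const_mul ‖c‖
      simpa using h2
    set d : C₀(X, ℂ) := ⟨⟨d0, hd0cont⟩, hd0zero⟩ with hd
    refine ⟨d, fun x hx => if_pos hx, fun x hx => if_neg hx, ?_⟩
    intro y
    have hterm : ∀ x : Fiber Δ φ y, (ρ x.1 : ℂ) * d x.1 = c y * ((ρ x.1 : ℂ) * a x.1) := by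
      intro x
      have h1 : d x.1 = c (φ x.1) * a x.1 := if_pos x.2.1
      rw [h1, x.2.2]; ring
    rw [tsum_congr hterm, tsum_mul_left, hbg y]
end
end
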